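/- arXiv:1409.1396 — 5 statements merged into one kernel-verified Lean document; each statement's English description precedes it below -/
import Mathlib

section
/- For any positive integer k and any vector ζ⃗ ∈ ℝ^k, one has λ_{k,1}(ζ⃗) = ∞ if and only if λ̂_{k,2}(ζ⃗) = λ̂_{k,3}(ζ⃗) = ⋯ = λ̂_{k,k+1}(ζ⃗) = 0. -/
open scoped ENNReal

/-- The system `|x| ≤ X`, `max_{1≤i≤k} |ζ_i·x − y_i| ≤ X^(−η)` has at least `j`
linearly independent integer solutions `(x, y_1, …, y_k) ∈ ℤ^(k+1)`.
Here the solution vector `v i : Fin (k+1) → ℤ` has `x = v i 0` and `y_m = v i m.succ`. -/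
def HasSolutions (k : ℕ) (ζ : Fin k → ℝ) (η X : ℝ) (j : ℕ) : Prop :=
  ∃ v : Fin j → (Fin (k + 1) → ℤ), LinearIndependent ℤ v ∧
    ∀ i : Fin j, |(v i 0 : ℝ)| ≤ X ∧
      ∀ m : Fin k, |ζ m * (v i 0 : ℝ) - (v i m.succ : ℝ)| ≤ X ^ (-η)

/-- `λ_{k,j}(ζ⃗)`: the supremum in `[0,∞]` of all `η ∈ ℝ` such that the system has at
least `j` linearly independent solutions for arbitrarily large real `X`. -/
noncomputable def lambdaVec (k j : ℕ) (ζ : Fin k → ℝ) : ℝ≥0∞ :=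
  sSup {e : ℝ≥0∞ | ∃ η : ℝ, e = ENNReal.ofReal η ∧
    ∀ X₀ : ℝ, ∃ X : ℝ, X₀ ≤ X ∧ HasSolutions k ζ η X j}

/-- `λ̂_{k,j}(ζ⃗)`: the supremum in `[0,∞]` of all `η ∈ ℝ` such that the system has at
least `j` linearly independent solutions for every sufficiently large real `X`. -/
noncomputable def lambdaHatVec (k j : ℕ) (ζ : Fin k → ℝ) : ℝ≥0∞ :=
  sSup {e : ℝ≥0∞ | ∃ η : ℝ, e = ENNReal.ofReal η ∧
    ∃ X₀ : ℝ, ∀ X : ℝ, X₀ ≤ X → HasSolutions k ζ η X j}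

/-- `λ_{k,j}(ζ) = λ_{k,j}(ζ, ζ², …, ζ^k)`. -/
noncomputable def lambdaPow (k j : ℕ) (ζ : ℝ) : ℝ≥0∞ :=
  lambdaVec k j fun i => ζ ^ ((i : ℕ) + 1)

/-- `λ̂_{k,j}(ζ) = λ̂_{k,j}(ζ, ζ², …, ζ^k)`. -/
noncomputable def lambdaHatPow (k j : ℕ) (ζ : ℝ) : ℝ≥0∞ :=
  lambdaHatVec k j fun i => ζ ^ ((i : ℕ) + 1)

lemma floors_close {p q : ℝ} {Q : ℕ} (hQ : 0 < Q) (h : ⌊p * Q⌋ = ⌊q * Q⌋) :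
    |p - q| ≤ 1 / Q := by
  have hQ' : (0:ℝ) < Q := by exact_mod_cast hQ
  have h1 : p * Q < ⌊q * Q⌋ + 1 := by rw [← h]; exact Int.lt_floor_add_one _
  have h2 : (⌊q * Q⌋ : ℝ) ≤ p * Q := by rw [← h]; exact Int.floor_le _
  have h3 : q * Q < ⌊q * Q⌋ + 1 := Int.lt_floor_add_one _
  have h4 : (⌊q * Q⌋ : ℝ) ≤ q * Q := Int.floor_le _
  rw [abs_le]
  constructor
  · have hqp : q - p ≤ 1 / Q := by rw [le_div_iff₀ hQ']; nlinarith
    linarith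
  · rw [le_div_iff₀ hQ']
    nlinarith

lemma dirichlet (k : ℕ) (ζ : Fin k → ℝ) (Q N : ℕ) (hQ : 0 < Q) (h : Q ^ k < N + 1) :
    ∃ v : Fin (k+1) → ℤ, 0 < v 0 ∧ ((v 0 : ℝ) ≤ N) ∧
      ∀ m : Fin k, |ζ m * (v 0 : ℝ) - (v m.succ : ℝ)| ≤ 1 / (Q:ℝ) := by
  have hQ' : (0:ℝ) < Q := by exact_mod_cast hQ
  set f : Fin (N+1) → (Fin k → Fin Q) := fun x m =>
    ⟨(⌊Int.fract (ζ m * x) * Q⌋).toNat, by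
      have h1 : Int.fract (ζ m * x) * Q < Q := by
        have := Int.fract_lt_one (ζ m * x)
        nlinarith
      have h2 : ⌊Int.fract (ζ m * x) * Q⌋ < (Q:ℤ) := by
        rw [Int.floor_lt]; exact_mod_cast h1
      omega⟩ with hf
  have hcard : Fintype.card (Fin k → Fin Q) < Fintype.card (Fin (N+1)) := by
    simp only [Fintype.card_fun, Fintype.card_fin]; exact h
  obtain ⟨x, y, hne, heq⟩ := Fintype.exists_ne_map_eq_of_card_lt f hcard
  -- wlog x < y
  have key : ∀ a b : Fin (N+1), (a:ℕ) < (b:ℕ) → f a = f b →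
      ∃ v : Fin (k+1) → ℤ, 0 < v 0 ∧ ((v 0 : ℝ) ≤ N) ∧
        ∀ m : Fin k, |ζ m * (v 0 : ℝ) - (v m.succ : ℝ)| ≤ 1 / (Q:ℝ) := by
    intro a b hab hfab
    refine ⟨Fin.cases ((b:ℤ) - (a:ℤ)) (fun m => ⌊ζ m * b⌋ - ⌊ζ m * a⌋), ?_, ?_, ?_⟩
    · simp only [Fin.cases_zero]; omega
    · simp only [Fin.cases_zero]
      push_cast
      have : (b:ℝ) ≤ N := by exact_mod_cast Nat.lt_succ_iff.mp b.isLt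
      have : (0:ℝ) ≤ a := by positivity
      linarith
    · intro m
      simp only [Fin.cases_zero, Fin.cases_succ]
      have hfl : ⌊Int.fract (ζ m * a) * Q⌋ = ⌊Int.fract (ζ m * b) * Q⌋ := by
        have := congrFun hfab m
        simp only [hf, Fin.mk.injEq] at this
        have ha0 : 0 ≤ ⌊Int.fract (ζ m * ↑↑a) * Q⌋ :=
          Int.floor_nonneg.mpr (mul_nonneg (Int.fract_nonneg _) hQ'.le)
        have hb0 : 0 ≤ ⌊Int.fract (ζ m * ↑↑b) * Q⌋ :=
          Int.floor_nonneg.mpr (mul_nonneg (Int.fract_nonneg _) hQ'.le)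
        omega
      have := floors_close hQ hfl
      have hexp : ζ m * ((b:ℤ) - (a:ℤ) : ℤ) - ((⌊ζ m * b⌋ - ⌊ζ m * a⌋ : ℤ) : ℝ) =
          -(Int.fract (ζ m * a) - Int.fract (ζ m * b)) := by
        rw [Int.fract, Int.fract]
        push_cast
        ring
      rw [hexp, abs_neg]
      exact this
  rcases Nat.lt_or_ge (x:ℕ) (y:ℕ) with hlt | hge
  · exact key x y hlt heq
  · have : (y:ℕ) < (x:ℕ) := by
      rcases Nat.lt_or_ge (y:ℕ) (x:ℕ) with h' | h'
      · exact h'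
      · exact absurd (Fin.ext (le_antisymm hge h')) hne.symm
    exact key y x this heq.symm

lemma le_rpow_thresh {C X c e : ℝ} (hC : 1 ≤ C) (hX : C ^ (1/c) ≤ X)
    (hc : 0 < c) (hce : c ≤ e) : C ≤ X ^ e := by
  have h1 : (1:ℝ) ≤ C ^ (1/c) := Real.one_le_rpow hC (by positivity)
  have hX1 : (1:ℝ) ≤ X := le_trans h1 hX
  have h2 : (C ^ (1/c)) ^ c ≤ X ^ c :=
    Real.rpow_le_rpow (by positivity) hX hc.le
  have h3 : (C ^ (1/c)) ^ c = C := by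
    rw [← Real.rpow_mul (by linarith), one_div_mul_cancel hc.ne', Real.rpow_one]
  have h4 : X ^ c ≤ X ^ e := Real.rpow_le_rpow_of_exponent_le hX1 hce
  linarith [h2, h4, h3 ▸ h2]

lemma rel_of_not_li {n : ℕ} {v w : Fin n → ℤ} (hv : v ≠ 0) (hw : w ≠ 0)
    (h : ¬ LinearIndependent ℤ ![v, w]) :
    ∃ a b : ℤ, a ≠ 0 ∧ b ≠ 0 ∧ a • v + b • w = 0 := by
  rw [Fintype.linearIndependent_iff] at h
  push_neg at h
  obtain ⟨g, hg, i, hi⟩ := h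
  rw [Fin.sum_univ_two] at hg
  simp only [Matrix.cons_val_zero, Matrix.cons_val_one, Matrix.head_cons] at hg
  have h0 : g 0 ≠ 0 := by
    intro h0
    rw [h0, zero_smul, zero_add] at hg
    rcases smul_eq_zero.mp hg with h'|h'
    · apply hi
      fin_cases i
      · exact h0
      · exact h'
    · exact hw h'
  have h1 : g 1 ≠ 0 := by
    intro h1
    rw [h1, zero_smul, add_zero] at hg
    rcases smul_eq_zero.mp hg with h'|h'
    · exact h0 h'
    · exact hv h'
  exact ⟨g 0, g 1, h0, h1, hg⟩

lemma li_single {n : ℕ} {v : Fin n → ℤ} (hv : v ≠ 0) :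
    LinearIndependent ℤ (fun _ : Fin 1 => v) := by
  rw [Fintype.linearIndependent_iff]
  intro g hg i
  rw [Fin.sum_univ_one] at hg
  rcases smul_eq_zero.mp hg with h'|h'
  · have : i = 0 := Subsingleton.elim _ _
    rw [this]; exact h'
  · exact absurd h' hv
lemma exp_calc1 {K η₁ : ℝ} (hK : K ≠ 0) (hη : η₁ ≠ 0) :
    2*K*(1/(4*K^2*η₁)) * -η₁ = -(1/(2*K)) := by
  field_simp
  ring

lemma exp_calc2 {K : ℝ} (hK : K ≠ 0) : 1/(2*K) + -(1/K) = -(1/(2*K)) := by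
  field_simp
  ring

lemma key_exists (k : ℕ) (hk : 0 < k) (ζ : Fin k → ℝ)
    (h2 : ∀ ε : ℝ, 0 < ε → ∀ Y₀ : ℝ, ∃ Y, Y₀ ≤ Y ∧ ¬ HasSolutions k ζ ε Y 2)
    (η₁ : ℝ) (hη₁ : 1 ≤ η₁) (X₀ : ℝ) :
    ∃ X, X₀ ≤ X ∧ 1 ≤ X ∧ HasSolutions k ζ η₁ X 1 := by
  have hK : (1:ℝ) ≤ (k:ℝ) := by exact_mod_cast hk
  have hKpos : (0:ℝ) < k := by linarith
  have hη₁pos : (0:ℝ) < η₁ := by linarith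
  set K : ℝ := (k:ℝ) with hKdef
  set ε : ℝ := 1/(4*K^2*η₁) with hεdef
  have hεpos : 0 < ε := by positivity
  set c : ℝ := min (1/(2*K)) (K*ε) with hcdef
  have hcpos : 0 < c := by positivity
  -- numeric exponent facts
  have hkε : K * ε = 1/(4*K*η₁) := by rw [hεdef]; field_simp
  have hkεquarter : K * ε ≤ 1/4 := by
    rw [hkε]; rw [div_le_iff₀ (by positivity)]; nlinarith
  have hεhalf : ε ≤ 1/(2*K) := by
    rw [hεdef, div_le_div_iff₀ (by positivity) (by positivity)]; nlinarith
  have h12K : 1/(2*K) ≤ 1/2 := by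
    rw [div_le_div_iff₀ (by positivity) (by norm_num)]; nlinarith
  have hc1 : c ≤ 1 - K*ε := le_trans (min_le_left _ _) (by linarith)
  have hc2 : c ≤ 1/K - ε := le_trans (min_le_left _ _) (by
    have : 1/(2*K) + ε ≤ 1/K := by
      have h1 : 1/(2*K) + 1/(2*K) = 1/K := by ring
      linarith [hεhalf]
    linarith)
  have hc3 : c ≤ 1/(2*K) := min_le_left _ _
  have hc4 : c ≤ K*ε := min_le_right _ _
  have hc5 : c ≤ 1/K := by
    have : 1/(2*K) ≤ 1/K := by
      rw [div_le_div_iff₀ (by positivity) (by positivity)]; nlinarith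
    linarith
  -- get Y
  set Y₀req : ℝ := max (((2:ℝ)^k) ^ (1/c)) (max ((max X₀ 1) ^ (1/(2*K*ε))) 2) with hYdef
  obtain ⟨Y, hYge, hnot⟩ := h2 ε hεpos Y₀req
  have hY2 : (2:ℝ) ≤ Y := le_trans (le_trans (le_max_right _ _) (le_max_right _ _)) hYge
  have hY1 : (1:ℝ) ≤ Y := by linarith
  have hYpos : (0:ℝ) < Y := by linarith
  have hY2k : ((2:ℝ)^k) ^ (1/c) ≤ Y := le_trans (le_max_left _ _) hYge
  have h2k1 : (1:ℝ) ≤ (2:ℝ)^k := one_le_pow₀ (by norm_num)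
  have hY2' : (2:ℝ) ^ (1/c) ≤ Y := by
    refine le_trans ?_ hY2k
    exact Real.rpow_le_rpow (by norm_num) (by
      calc (2:ℝ) = 2^1 := (pow_one 2).symm
      _ ≤ 2^k := pow_le_pow_right₀ (by norm_num) hk) (by positivity)
  -- power facts
  have P1 : (2:ℝ)^k ≤ Y ^ (K*ε) := le_rpow_thresh h2k1 hY2k hcpos hc4
  have P2 : (2:ℝ)^k ≤ Y ^ (1 - K*ε) := le_rpow_thresh h2k1 hY2k hcpos hc1
  have P3 : (2:ℝ) ≤ Y ^ (1/K - ε) := le_rpow_thresh (by norm_num) hY2' hcpos hc2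
  have P4 : (2:ℝ) ≤ Y ^ (1/(2*K)) := le_rpow_thresh (by norm_num) hY2' hcpos hc3
  have P5 : (2:ℝ) ≤ Y ^ (1/K) := le_rpow_thresh (by norm_num) hY2' hcpos hc5
  have P6 : max X₀ 1 ≤ Y ^ (2*K*ε) := by
    have hmx1 : (1:ℝ) ≤ max X₀ 1 := le_max_right _ _
    have h1 : (max X₀ 1) ^ (1/(2*K*ε)) ≤ Y := le_trans (le_trans (le_max_left _ _) (le_max_right _ _)) hYge
    have h2' : ((max X₀ 1) ^ (1/(2*K*ε))) ^ (2*K*ε) ≤ Y ^ (2*K*ε) :=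
      Real.rpow_le_rpow (by positivity) h1 (by positivity)
    rwa [← Real.rpow_mul (by linarith), one_div_mul_cancel (by positivity), Real.rpow_one] at h2'
  -- the solution predicate
  set Psol : (Fin (k+1) → ℤ) → Prop := fun u => u ≠ 0 ∧ |(u 0 : ℝ)| ≤ Y ∧
    ∀ m : Fin k, |ζ m * (u 0 : ℝ) - (u m.succ : ℝ)| ≤ Y ^ (-ε) with hPdef
  have hYeps1 : Y ^ (-ε) < 1 := Real.rpow_lt_one_of_one_lt_of_neg (by linarith) (by linarith)
  have hx0 : ∀ u, Psol u → u 0 ≠ 0 := by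
    intro u hu hu0
    apply hu.1
    funext i
    refine Fin.cases ?_ ?_ i
    · exact hu0
    · intro m
      have := hu.2.2 m
      rw [hu0] at this
      simp only [Int.cast_zero, mul_zero, zero_sub, abs_neg] at this
      have hlt : |(u m.succ : ℝ)| < 1 := lt_of_le_of_lt this hYeps1
      have habs := abs_lt.mp hlt
      have hi1 : u m.succ < 1 := by exact_mod_cast habs.2
      have hi2 : -1 < u m.succ := by exact_mod_cast habs.1
      have : u m.succ = 0 := by omega
      exact_mod_cast this
  -- solution (b): good error
  set Q1 : ℕ := ⌈Y ^ (1/K) / 2⌉₊ with hQ1def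
  have hY1Kpos : (0:ℝ) < Y ^ (1/K) := by positivity
  have hQ1pos : 0 < Q1 := Nat.ceil_pos.mpr (by linarith)
  have hQ1le : (Q1:ℝ) ≤ Y ^ (1/K) := by
    have h1 : (Q1:ℝ) < Y ^ (1/K)/2 + 1 := Nat.ceil_lt_add_one (by positivity)
    linarith
  have hQ1ge : Y ^ (1/K) / 2 ≤ (Q1:ℝ) := Nat.le_ceil _
  set N1 : ℕ := ⌊Y⌋₊ with hN1def
  have hQN1 : Q1 ^ k < N1 + 1 := by
    have h1 : ((Q1:ℝ)) ^ k ≤ (Y ^ (1/K)) ^ k := pow_le_pow_left₀ (by positivity) hQ1le k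
    have h2 : (Y ^ (1/K)) ^ k = Y := by
      rw [← Real.rpow_natCast (Y ^ (1/K)) k, ← Real.rpow_mul hYpos.le]
      rw [show (1/K) * (k:ℕ) = 1 by rw [hKdef]; field_simp, Real.rpow_one]
    have h3 : ((Q1 ^ k : ℕ) : ℝ) ≤ Y := by push_cast; rw [← h2]; exact h1
    have h4 : Q1 ^ k ≤ N1 := Nat.le_floor h3
    omega
  obtain ⟨v, hv0pos, hv0le, hverr⟩ := dirichlet k ζ Q1 N1 hQ1pos hQN1
  have hvY : ((v 0 : ℤ) : ℝ) ≤ Y := le_trans hv0le (Nat.floor_le hYpos.le)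
  have hverr2 : ∀ m, |ζ m * ((v 0 : ℤ):ℝ) - ((v m.succ : ℤ):ℝ)| ≤ 2 * Y ^ (-(1/K)) := by
    intro m
    refine le_trans (hverr m) ?_
    have h1 : Y ^ (1/K) ≤ 2 * Q1 := by linarith
    have h2 : 1/(Q1:ℝ) ≤ 2/(Y ^ (1/K)) := by
      rw [div_le_div_iff₀ (by exact_mod_cast hQ1pos) hY1Kpos]
      linarith
    rw [Real.rpow_neg hYpos.le]
    rw [show 2 * (Y ^ (1/K))⁻¹ = 2/(Y^(1/K)) by ring]
    exact h2
  have hv0pos' : (0:ℝ) < ((v 0 : ℤ):ℝ) := by exact_mod_cast hv0pos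
  have hvne : v ≠ 0 := by
    intro h
    rw [h] at hv0pos
    simp at hv0pos
  have herrsplit : Y ^ (-ε) = Y ^ (1/K - ε) * Y ^ (-(1/K)) := by
    rw [← Real.rpow_add hYpos]; congr 1; ring
  have hPv : Psol v := by
    refine ⟨hvne, by rw [abs_of_pos hv0pos']; exact hvY, ?_⟩
    intro m
    refine le_trans (hverr2 m) ?_
    rw [herrsplit]
    exact mul_le_mul_of_nonneg_right P3 (Real.rpow_nonneg hYpos.le _)
  -- solution (b'): small x
  set Q2 : ℕ := ⌈Y ^ ε⌉₊ with hQ2def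
  have hYε1 : (1:ℝ) ≤ Y ^ ε := Real.one_le_rpow hY1 hεpos.le
  have hQ2pos : 0 < Q2 := Nat.ceil_pos.mpr (by linarith)
  have hQ2le : (Q2:ℝ) ≤ 2 * Y ^ ε := by
    have h1 : (Q2:ℝ) < Y ^ ε + 1 := Nat.ceil_lt_add_one (by positivity)
    linarith
  have hQ2ge : Y ^ ε ≤ (Q2:ℝ) := Nat.le_ceil _
  set N2 : ℕ := ⌊(2:ℝ)^k * Y ^ (K*ε)⌋₊ with hN2def
  have hQN2 : Q2 ^ k < N2 + 1 := by
    have h1 : ((Q2:ℝ)) ^ k ≤ (2 * Y ^ ε) ^ k := pow_le_pow_left₀ (by positivity) hQ2le k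
    have h2 : (2 * Y ^ ε) ^ k = 2^k * Y ^ (K*ε) := by
      rw [mul_pow, ← Real.rpow_natCast (Y ^ ε) k, ← Real.rpow_mul hYpos.le]
      congr 2
      rw [hKdef]; ring
    have h3 : ((Q2 ^ k : ℕ) : ℝ) ≤ (2:ℝ)^k * Y ^ (K*ε) := by push_cast; rw [← h2]; exact h1
    have h4 : Q2 ^ k ≤ N2 := Nat.le_floor h3
    omega
  obtain ⟨w, hw0pos, hw0le, hwerr⟩ := dirichlet k ζ Q2 N2 hQ2pos hQN2
  have hw0le' : ((w 0 : ℤ):ℝ) ≤ (2:ℝ)^k * Y ^ (K*ε) :=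
    le_trans hw0le (Nat.floor_le (by positivity))
  have hwerr' : ∀ m, |ζ m * ((w 0 : ℤ):ℝ) - ((w m.succ : ℤ):ℝ)| ≤ Y ^ (-ε) := by
    intro m
    refine le_trans (hwerr m) ?_
    rw [Real.rpow_neg hYpos.le, ← one_div]
    exact one_div_le_one_div_of_le (by positivity) hQ2ge
  have hw0pos' : (0:ℝ) < ((w 0 : ℤ):ℝ) := by exact_mod_cast hw0pos
  have hwne : w ≠ 0 := by
    intro h; rw [h] at hw0pos; simp at hw0pos
  have hwY : ((w 0:ℤ):ℝ) ≤ Y := by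
    have h1 : (2:ℝ)^k * Y ^ (K*ε) ≤ Y ^ (1 - K*ε) * Y ^ (K*ε) :=
      mul_le_mul_of_nonneg_right P2 (Real.rpow_nonneg hYpos.le _)
    have h2 : Y ^ (1 - K*ε) * Y ^ (K*ε) = Y := by
      rw [← Real.rpow_add hYpos]; norm_num
    linarith
  have hPw : Psol w := ⟨hwne, by rw [abs_of_pos hw0pos']; exact hwY, hwerr'⟩
  have hKne : K ≠ 0 := by positivity
  have hηne : η₁ ≠ 0 := by positivity
  -- minimal |x| solution
  set A : Set ℕ := {n | ∃ u, Psol u ∧ (u 0).natAbs = n} with hAdef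
  have hAne : A.Nonempty := ⟨(w 0).natAbs, w, hPw, rfl⟩
  obtain ⟨v₀, hPv₀, hv₀n⟩ := Nat.sInf_mem hAne
  have hmin : ∀ u, Psol u → (v₀ 0).natAbs ≤ (u 0).natAbs := by
    intro u hu
    rw [hv₀n]
    exact Nat.sInf_le ⟨u, hu, rfl⟩
  have hv₀ne : v₀ ≠ 0 := hPv₀.1
  have hv₀0 : v₀ 0 ≠ 0 := hx0 v₀ hPv₀
  have hv00 : v 0 ≠ 0 := hx0 v hPv
  -- pair with v
  have hpair : ¬ LinearIndependent ℤ ![v₀, v] := by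
    intro hli
    apply hnot
    refine ⟨![v₀, v], hli, ?_⟩
    intro i
    fin_cases i <;>
      simp only [Matrix.cons_val_zero, Matrix.cons_val_one, Matrix.head_cons, Fin.mk_zero,
        Fin.mk_one]
    · exact ⟨hPv₀.2.1, hPv₀.2.2⟩
    · exact ⟨hPv.2.1, hPv.2.2⟩
  obtain ⟨a, b, ha, hb, hrel⟩ := rel_of_not_li hv₀ne hvne hpair
  have hco : ∀ i, a * v₀ i + b * v i = 0 := by
    intro i
    have := congrFun hrel i
    simpa [Pi.add_apply, Pi.smul_apply, smul_eq_mul] using this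
  have habs0 : |v₀ 0| ≤ |v 0| := by
    have h := hmin v hPv
    rw [Int.abs_eq_natAbs, Int.abs_eq_natAbs]
    exact_mod_cast h
  have hba : |b| ≤ |a| := by
    have h0 := hco 0
    have h1 : |a * v₀ 0| = |b * v 0| := by
      rw [show a * v₀ 0 = -(b * v 0) from eq_neg_of_add_eq_zero_left h0, abs_neg]
    rw [abs_mul, abs_mul] at h1
    have hv₀0pos : 0 < |v₀ 0| := abs_pos.mpr hv₀0
    have h2 : |b| * |v₀ 0| ≤ |a| * |v₀ 0| := by
      calc |b| * |v₀ 0| ≤ |b| * |v 0| := mul_le_mul_of_nonneg_left habs0 (abs_nonneg b)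
        _ = |a| * |v₀ 0| := h1.symm
    exact le_of_mul_le_mul_right h2 hv₀0pos
  -- error bound for v₀
  have hv₀err : ∀ m : Fin k, |ζ m * ((v₀ 0:ℤ):ℝ) - ((v₀ m.succ:ℤ):ℝ)| ≤ 2 * Y ^ (-(1/K)) := by
    intro m
    have h0 : ((a:ℤ):ℝ) * ((v₀ 0:ℤ):ℝ) + ((b:ℤ):ℝ) * ((v 0:ℤ):ℝ) = 0 := by
      exact_mod_cast congrArg (fun z : ℤ => (z:ℝ)) (hco 0)
    have hs : ((a:ℤ):ℝ) * ((v₀ m.succ:ℤ):ℝ) + ((b:ℤ):ℝ) * ((v m.succ:ℤ):ℝ) = 0 := by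
      exact_mod_cast congrArg (fun z : ℤ => (z:ℝ)) (hco m.succ)
    have key : (a:ℝ) * (ζ m * ((v₀ 0:ℤ):ℝ) - ((v₀ m.succ:ℤ):ℝ)) =
        -((b:ℝ) * (ζ m * ((v 0:ℤ):ℝ) - ((v m.succ:ℤ):ℝ))) := by
      linear_combination (ζ m) * h0 - hs
    have habs : |(a:ℝ)| * |ζ m * ((v₀ 0:ℤ):ℝ) - ((v₀ m.succ:ℤ):ℝ)| =
        |(b:ℝ)| * |ζ m * ((v 0:ℤ):ℝ) - ((v m.succ:ℤ):ℝ)| := by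
      rw [← abs_mul, ← abs_mul, key, abs_neg]
    have hb2 : |(b:ℝ)| ≤ |(a:ℝ)| := by
      have : ((|b|:ℤ):ℝ) ≤ ((|a|:ℤ):ℝ) := by exact_mod_cast hba
      rwa [Int.cast_abs, Int.cast_abs] at this
    have hapos : (0:ℝ) < |(a:ℝ)| := abs_pos.mpr (by exact_mod_cast ha)
    have hdb := hverr2 m
    have h2 : |(a:ℝ)| * |ζ m * ((v₀ 0:ℤ):ℝ) - ((v₀ m.succ:ℤ):ℝ)| ≤
        |(a:ℝ)| * |ζ m * ((v 0:ℤ):ℝ) - ((v m.succ:ℤ):ℝ)| := by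
      rw [habs]
      exact mul_le_mul_of_nonneg_right hb2 (abs_nonneg _)
    have h3 := le_of_mul_le_mul_left h2 hapos
    exact le_trans h3 hdb
  -- x bound for v₀
  have hv₀x : |((v₀ 0:ℤ):ℝ)| ≤ Y ^ (2*K*ε) := by
    have h := hmin w hPw
    have h1 : |((v₀ 0:ℤ):ℝ)| ≤ |((w 0:ℤ):ℝ)| := by
      rw [← Int.cast_abs, ← Int.cast_abs, Int.cast_le, Int.abs_eq_natAbs, Int.abs_eq_natAbs]
      exact_mod_cast h
    have h2 : |((w 0:ℤ):ℝ)| ≤ (2:ℝ)^k * Y^(K*ε) := by rw [abs_of_pos hw0pos']; exact hw0le'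
    have h3 : (2:ℝ)^k * Y^(K*ε) ≤ Y^(K*ε) * Y^(K*ε) :=
      mul_le_mul_of_nonneg_right P1 (Real.rpow_nonneg hYpos.le _)
    have h4 : Y^(K*ε) * Y^(K*ε) = Y^(2*K*ε) := by
      rw [← Real.rpow_add hYpos]; congr 1; ring
    linarith
  -- final
  refine ⟨Y ^ (2*K*ε), le_trans (le_max_left _ _) P6,
    Real.one_le_rpow hY1 (by positivity), ?_⟩
  refine ⟨fun _ => v₀, li_single hv₀ne, ?_⟩
  intro i
  refine ⟨hv₀x, ?_⟩
  intro m
  have hXeq : (Y ^ (2*K*ε)) ^ (-η₁) = Y ^ (-(1/(2*K))) := by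
    rw [← Real.rpow_mul hYpos.le]
    congr 1
    rw [hεdef]
    exact exp_calc1 hKne hηne
  rw [hXeq]
  have hsplit2 : Y ^ (-(1/(2*K))) = Y ^ (1/(2*K)) * Y ^ (-(1/K)) := by
    rw [← Real.rpow_add hYpos]
    congr 1
    exact (exp_calc2 hKne).symm
  refine le_trans (hv₀err m) ?_
  rw [hsplit2]
  exact mul_le_mul_of_nonneg_right P4 (Real.rpow_nonneg hYpos.le _)
lemma abs_triple {a b c A B C : ℝ} (ha : |a| ≤ A) (hb : |b| ≤ B) (hc : |c| ≤ C) :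
    |a*b*c| ≤ A*B*C := by
  have h0a := abs_nonneg a; have h0b := abs_nonneg b; have h0c := abs_nonneg c
  rw [abs_mul, abs_mul]
  have h1 : |a| * |b| ≤ A*B := mul_le_mul ha hb h0b (by linarith)
  exact mul_le_mul h1 hc h0c (by nlinarith)

lemma no_two (k : ℕ) (ζ : Fin k → ℝ)
    (hgood : ∀ η' : ℝ, 0 ≤ η' → ∀ T : ℝ, ∃ X, T ≤ X ∧ HasSolutions k ζ η' X 1)
    (η : ℝ) (hη : 0 < η) (X₀ : ℝ)
    (hev : ∀ X : ℝ, X₀ ≤ X → HasSolutions k ζ η X 2) : False := by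
  classical
  set B : ℝ := 1 + ∑ m : Fin k, |ζ m| with hBdef
  have hB1 : 1 ≤ B := by
    have : 0 ≤ ∑ m : Fin k, |ζ m| := Finset.sum_nonneg fun m _ => abs_nonneg _
    rw [hBdef]; linarith
  have hζB : ∀ m : Fin k, |ζ m| ≤ B := by
    intro m
    have h1 : |ζ m| ≤ ∑ m : Fin k, |ζ m| :=
      Finset.single_le_sum (fun m _ => abs_nonneg (ζ m)) (Finset.mem_univ m)
    rw [hBdef]; linarith
  set η₁ : ℝ := 1 + 2/η with hη₁def
  have hη₁pos : 0 < η₁ := by positivity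
  have hη₁1 : 1 ≤ η₁ := by
    have : 0 ≤ 2/η := by positivity
    rw [hη₁def]; linarith
  set T : ℝ := max (6*B + 1) (max ((max X₀ 1) ^ (η/2)) 3) with hTdef
  obtain ⟨X, hXT, hsol1⟩ := hgood η₁ hη₁pos.le T
  have hX3 : (3:ℝ) ≤ X := le_trans (le_trans (le_max_right _ _) (le_max_right _ _)) hXT
  have hX6B : 6*B + 1 ≤ X := le_trans (le_max_left _ _) hXT
  have hXpos : (0:ℝ) < X := by linarith
  have hX1 : (1:ℝ) < X := by linarith
  have hX' : X₀ ≤ X ^ (2/η) := by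
    have h1 : (max X₀ 1) ^ (η/2) ≤ X :=
      le_trans (le_trans (le_max_left _ _) (le_max_right _ _)) hXT
    have h2 : ((max X₀ 1) ^ (η/2)) ^ (2/η) ≤ X ^ (2/η) :=
      Real.rpow_le_rpow (by positivity) h1 (by positivity)
    rw [← Real.rpow_mul (by positivity), show (η/2) * (2/η) = 1 by field_simp,
      Real.rpow_one] at h2
    exact le_trans (le_max_left _ _) h2
  obtain ⟨vs, hlis, hconds⟩ := hsol1
  set v : Fin (k+1) → ℤ := vs 0 with hvdef
  have hv_ne : v ≠ 0 := hlis.ne_zero 0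
  have hvx : |((v 0:ℤ):ℝ)| ≤ X := (hconds 0).1
  have hverr : ∀ m, |ζ m * ((v 0:ℤ):ℝ) - ((v m.succ:ℤ):ℝ)| ≤ X ^ (-η₁) := (hconds 0).2
  obtain ⟨us, hliu, hcondu⟩ := hev (X ^ (2/η)) hX'
  have herru : ∀ i m, |ζ m * ((us i 0:ℤ):ℝ) - ((us i m.succ:ℤ):ℝ)| ≤ X ^ (-(2:ℝ)) := by
    intro i m
    have h1 := (hcondu i).2 m
    rwa [← Real.rpow_mul hXpos.le, show (2/η) * (-η) = (-2:ℝ) by field_simp] at h1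
  have hux : ∀ i, |((us i 0:ℤ):ℝ)| ≤ X ^ (2/η) := fun i => (hcondu i).1
  -- useful power facts
  set E1 : ℝ := X ^ (-(1:ℝ)) with hE1def
  have hE1pos : 0 < E1 := Real.rpow_pos_of_pos hXpos _
  have hXX2 : X * X ^ (-(2:ℝ)) = E1 := by
    rw [hE1def]
    nth_rewrite 1 [← Real.rpow_one X]
    rw [← Real.rpow_add hXpos]; norm_num
  have hXe : X ^ (2/η) * X ^ (-η₁) = E1 := by
    rw [hE1def, ← Real.rpow_add hXpos]
    congr 1
    rw [hη₁def]; ring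
  have hEe : X ^ (-η₁) ≤ E1 := by
    rw [hE1def]
    exact Real.rpow_le_rpow_of_exponent_le hX1.le (by linarith)
  have hX2le1 : X ^ (-(2:ℝ)) ≤ 1 :=
    Real.rpow_le_one_of_one_le_of_nonpos hX1.le (by norm_num)
  have h6BE1 : 6 * B * E1 < 1 := by
    rw [hE1def, Real.rpow_neg_one, mul_inv_lt_iff₀ hXpos]
    linarith
  have hE13 : E1 ≤ 1/3 := by
    rw [hE1def, Real.rpow_neg_one, show (1:ℝ)/3 = 3⁻¹ by norm_num]
    exact inv_anti₀ (by norm_num) hX3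
  have int_eq_zero : ∀ z : ℤ, |(z:ℝ)| < 1 → z = 0 := by
    intro z h
    have h' := abs_lt.mp h
    have h1 : z < 1 := by exact_mod_cast h'.2
    have h2 : -1 < z := by exact_mod_cast h'.1
    omega
  -- minors vanish
  have hminor : ∀ (u : Fin (k+1) → ℤ), |((u 0:ℤ):ℝ)| ≤ X ^ (2/η) →
      (∀ m, |ζ m * ((u 0:ℤ):ℝ) - ((u m.succ:ℤ):ℝ)| ≤ X ^ (-(2:ℝ))) →
      ∀ p q : Fin (k+1), v p * u q = v q * u p := by
    intro u hu0 huerr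
    have hvfbound : ∀ m, |((v 0:ℤ):ℝ)| * |ζ m * ((u 0:ℤ):ℝ) - ((u m.succ:ℤ):ℝ)| ≤ E1 := by
      intro m
      have h := mul_le_mul hvx (huerr m) (abs_nonneg _) hXpos.le
      rwa [hXX2] at h
    have huebound : ∀ m, |((u 0:ℤ):ℝ)| * |ζ m * ((v 0:ℤ):ℝ) - ((v m.succ:ℤ):ℝ)| ≤ E1 := by
      intro m
      have h := mul_le_mul hu0 (hverr m) (abs_nonneg _) (by positivity)
      rwa [hXe] at h
    have hefbound : ∀ m n, |ζ m * ((v 0:ℤ):ℝ) - ((v m.succ:ℤ):ℝ)| *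
        |ζ n * ((u 0:ℤ):ℝ) - ((u n.succ:ℤ):ℝ)| ≤ E1 := by
      intro m n
      have h1 := mul_le_mul (hverr m) (huerr n) (abs_nonneg _) (by positivity)
      have h2 : X ^ (-η₁) * X ^ (-(2:ℝ)) ≤ E1 * 1 :=
        mul_le_mul hEe hX2le1 (by positivity) hE1pos.le
      rw [mul_one] at h2
      linarith
    have case1 : ∀ m : Fin k, v 0 * u m.succ = v m.succ * u 0 := by
      intro m
      have hid : ((v 0 * u m.succ - v m.succ * u 0 : ℤ) : ℝ) =
          -(((v 0:ℤ):ℝ) * (ζ m * ((u 0:ℤ):ℝ) - ((u m.succ:ℤ):ℝ))) +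
          ((u 0:ℤ):ℝ) * (ζ m * ((v 0:ℤ):ℝ) - ((v m.succ:ℤ):ℝ)) := by push_cast; ring
      have habs : |((v 0 * u m.succ - v m.succ * u 0 : ℤ) : ℝ)| < 1 := by
        rw [hid]
        refine lt_of_le_of_lt (abs_add_le _ _) ?_
        have h1 : |-(((v 0:ℤ):ℝ) * (ζ m * ((u 0:ℤ):ℝ) - ((u m.succ:ℤ):ℝ)))| ≤ E1 := by
          rw [abs_neg, abs_mul]; exact hvfbound m
        have h2 : |((u 0:ℤ):ℝ) * (ζ m * ((v 0:ℤ):ℝ) - ((v m.succ:ℤ):ℝ))| ≤ E1 := by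
          rw [abs_mul]; exact huebound m
        linarith
      have hz := int_eq_zero _ habs
      exact sub_eq_zero.mp hz
    have case2 : ∀ m n : Fin k, v m.succ * u n.succ = v n.succ * u m.succ := by
      intro m n
      have hid : ((v m.succ * u n.succ - v n.succ * u m.succ : ℤ) : ℝ) =
          ((ζ n * ((v 0:ℤ):ℝ) * (ζ m * ((u 0:ℤ):ℝ) - ((u m.succ:ℤ):ℝ)) -
            ζ m * ((v 0:ℤ):ℝ) * (ζ n * ((u 0:ℤ):ℝ) - ((u n.succ:ℤ):ℝ))) +
          (ζ m * ((u 0:ℤ):ℝ) * (ζ n * ((v 0:ℤ):ℝ) - ((v n.succ:ℤ):ℝ)) -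
            ζ n * ((u 0:ℤ):ℝ) * (ζ m * ((v 0:ℤ):ℝ) - ((v m.succ:ℤ):ℝ)))) +
          ((ζ m * ((v 0:ℤ):ℝ) - ((v m.succ:ℤ):ℝ)) * (ζ n * ((u 0:ℤ):ℝ) - ((u n.succ:ℤ):ℝ)) -
           (ζ n * ((v 0:ℤ):ℝ) - ((v n.succ:ℤ):ℝ)) * (ζ m * ((u 0:ℤ):ℝ) - ((u m.succ:ℤ):ℝ))) := by
        push_cast; ring
      have hb1 : ∀ (mm nn : Fin k), |ζ nn * ((v 0:ℤ):ℝ) *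
          (ζ mm * ((u 0:ℤ):ℝ) - ((u mm.succ:ℤ):ℝ))| ≤ B * E1 := by
        intro mm nn
        have h := abs_triple (hζB nn) hvx (huerr mm)
        exact h.trans (le_of_eq (by rw [mul_assoc, hXX2]))
      have hb2 : ∀ (mm nn : Fin k), |ζ mm * ((u 0:ℤ):ℝ) *
          (ζ nn * ((v 0:ℤ):ℝ) - ((v nn.succ:ℤ):ℝ))| ≤ B * E1 := by
        intro mm nn
        have h := abs_triple (hζB mm) hu0 (hverr nn)
        exact h.trans (le_of_eq (by rw [mul_assoc, hXe]))
      have habs : |((v m.succ * u n.succ - v n.succ * u m.succ : ℤ) : ℝ)| < 1 := by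
        rw [hid]
        refine lt_of_le_of_lt (abs_add_le _ _) ?_
        have hG1 : |ζ n * ((v 0:ℤ):ℝ) * (ζ m * ((u 0:ℤ):ℝ) - ((u m.succ:ℤ):ℝ)) -
            ζ m * ((v 0:ℤ):ℝ) * (ζ n * ((u 0:ℤ):ℝ) - ((u n.succ:ℤ):ℝ))| ≤ 2 * (B * E1) := by
          refine le_trans (abs_sub _ _) ?_
          have := hb1 m n
          have := hb1 n m
          linarith
        have hG2 : |ζ m * ((u 0:ℤ):ℝ) * (ζ n * ((v 0:ℤ):ℝ) - ((v n.succ:ℤ):ℝ)) -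
            ζ n * ((u 0:ℤ):ℝ) * (ζ m * ((v 0:ℤ):ℝ) - ((v m.succ:ℤ):ℝ))| ≤ 2 * (B * E1) := by
          refine le_trans (abs_sub _ _) ?_
          have := hb2 n m
          have := hb2 m n
          linarith
        have hG3 : |(ζ m * ((v 0:ℤ):ℝ) - ((v m.succ:ℤ):ℝ)) *
              (ζ n * ((u 0:ℤ):ℝ) - ((u n.succ:ℤ):ℝ)) -
            (ζ n * ((v 0:ℤ):ℝ) - ((v n.succ:ℤ):ℝ)) *
              (ζ m * ((u 0:ℤ):ℝ) - ((u m.succ:ℤ):ℝ))| ≤ 2 * E1 := by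
          refine le_trans (abs_sub _ _) ?_
          have h1 : |(ζ m * ((v 0:ℤ):ℝ) - ((v m.succ:ℤ):ℝ)) *
              (ζ n * ((u 0:ℤ):ℝ) - ((u n.succ:ℤ):ℝ))| ≤ E1 := by
            rw [abs_mul]; exact hefbound m n
          have h2 : |(ζ n * ((v 0:ℤ):ℝ) - ((v n.succ:ℤ):ℝ)) *
              (ζ m * ((u 0:ℤ):ℝ) - ((u m.succ:ℤ):ℝ))| ≤ E1 := by
            rw [abs_mul]; exact hefbound n m
          linarith
        have hG12 : |ζ n * ((v 0:ℤ):ℝ) * (ζ m * ((u 0:ℤ):ℝ) - ((u m.succ:ℤ):ℝ)) -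
            ζ m * ((v 0:ℤ):ℝ) * (ζ n * ((u 0:ℤ):ℝ) - ((u n.succ:ℤ):ℝ)) +
            (ζ m * ((u 0:ℤ):ℝ) * (ζ n * ((v 0:ℤ):ℝ) - ((v n.succ:ℤ):ℝ)) -
            ζ n * ((u 0:ℤ):ℝ) * (ζ m * ((v 0:ℤ):ℝ) - ((v m.succ:ℤ):ℝ)))| ≤ 4 * (B * E1) := by
          refine le_trans (abs_add_le _ _) ?_
          linarith
        have hBE1 : E1 ≤ B * E1 := by nlinarith
        linarith
      have hz := int_eq_zero _ habs
      exact sub_eq_zero.mp hz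
    intro p q
    induction p using Fin.cases with
    | zero =>
      induction q using Fin.cases with
      | zero => rfl
      | succ n => exact case1 n
    | succ m =>
      induction q using Fin.cases with
      | zero => exact (case1 m).symm
      | succ n => exact case2 m n
  -- conclude
  obtain ⟨j, hj⟩ : ∃ j, v j ≠ 0 := by
    by_contra h
    push_neg at h
    exact hv_ne (funext h)
  have hrel : ∀ i : Fin 2, ∀ q, v j * us i q = v q * us i j :=
    fun i q => hminor (us i) (hux i) (herru i) j q
  have husj : us 0 j ≠ 0 := by
    intro h0
    have husz : us 0 = 0 := by
      funext q
      have h1 := hrel 0 q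
      rw [h0, mul_zero] at h1
      rcases mul_eq_zero.mp h1 with h'|h'
      · exact absurd h' hj
      · exact h'
    exact hliu.ne_zero 0 husz
  rw [Fintype.linearIndependent_iff] at hliu
  have hsum : ∑ i : Fin 2, (![us 1 j * v j, -(us 0 j * v j)] i) • us i = 0 := by
    rw [Fin.sum_univ_two]
    funext q
    simp only [Matrix.cons_val_zero, Matrix.cons_val_one, Matrix.head_cons, Pi.add_apply,
      Pi.smul_apply, smul_eq_mul, Pi.zero_apply]
    have h0 := hrel 0 q
    have h1 := hrel 1 q
    linear_combination us 1 j * h0 - us 0 j * h1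
  have hfin := hliu _ hsum 1
  simp only [Matrix.cons_val_one, Matrix.head_cons, Matrix.cons_val_zero, neg_eq_zero] at hfin
  exact (mul_ne_zero husj hj) hfin

/-- Lemma: `λ_{k,1}(ζ⃗) = ∞` iff `λ̂_{k,2}(ζ⃗) = ⋯ = λ̂_{k,k+1}(ζ⃗) = 0`. -/
theorem stmt2 (k : ℕ) (hk : 0 < k) (ζ : Fin k → ℝ) :
    lambdaVec k 1 ζ = ⊤ ↔ ∀ j : ℕ, 2 ≤ j → j ≤ k + 1 → lambdaHatVec k j ζ = 0 := by
  constructor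
  · intro htop j h2j hjk
    -- derive the "arbitrarily good single solutions" property
    have hgood : ∀ η' : ℝ, 0 ≤ η' → ∀ T : ℝ, ∃ X, T ≤ X ∧ HasSolutions k ζ η' X 1 := by
      intro η' hη' T
      have h1 : ENNReal.ofReal (η' + 1) < lambdaVec k 1 ζ := by
        rw [htop]; exact ENNReal.ofReal_lt_top
      unfold lambdaVec at h1
      rw [lt_sSup_iff] at h1
      obtain ⟨e, ⟨η₂, rfl, hprop⟩, hlt⟩ := h1
      have hη₂ : η' + 1 < η₂ :=
        (ENNReal.ofReal_lt_ofReal_iff_of_nonneg (by linarith)).mp hlt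
      obtain ⟨X, hXT, hsol⟩ := hprop (max T 1)
      have hX1 : (1:ℝ) ≤ X := le_trans (le_max_right _ _) hXT
      refine ⟨X, le_trans (le_max_left _ _) hXT, ?_⟩
      obtain ⟨vv, hli, hcond⟩ := hsol
      refine ⟨vv, hli, fun i => ⟨(hcond i).1, fun m => le_trans ((hcond i).2 m) ?_⟩⟩
      exact Real.rpow_le_rpow_of_exponent_le hX1 (by linarith)
    refine le_antisymm (sSup_le ?_) zero_le
    rintro e ⟨η, rfl, X₀, hX₀⟩
    rw [le_zero_iff, ENNReal.ofReal_eq_zero]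
    by_contra hη
    push_neg at hη
    refine no_two k ζ hgood η hη X₀ ?_
    intro X hX
    obtain ⟨vv, hli, hcond⟩ := hX₀ X hX
    exact ⟨vv ∘ Fin.castLE h2j, hli.comp _ (Fin.castLE_injective h2j),
      fun i => hcond (Fin.castLE h2j i)⟩
  · intro h0
    have hhat2 := h0 2 le_rfl (by omega)
    have h2 : ∀ ε : ℝ, 0 < ε → ∀ Y₀ : ℝ, ∃ Y, Y₀ ≤ Y ∧ ¬ HasSolutions k ζ ε Y 2 := by
      intro ε hε Y₀
      by_contra hcon
      push_neg at hcon
      have hmem : ENNReal.ofReal ε ∈ {e : ℝ≥0∞ | ∃ η : ℝ, e = ENNReal.ofReal η ∧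
          ∃ X₀ : ℝ, ∀ X : ℝ, X₀ ≤ X → HasSolutions k ζ η X 2} :=
        ⟨ε, rfl, Y₀, hcon⟩
      have hle : ENNReal.ofReal ε ≤ lambdaHatVec k 2 ζ := le_sSup hmem
      rw [hhat2, le_zero_iff, ENNReal.ofReal_eq_zero] at hle
      linarith
    by_contra hne
    obtain ⟨n, hn⟩ := ENNReal.exists_nat_gt hne
    have hmem : ENNReal.ofReal (max (n:ℝ) 1) ∈ {e : ℝ≥0∞ | ∃ η : ℝ, e = ENNReal.ofReal η ∧
        ∀ X₀ : ℝ, ∃ X : ℝ, X₀ ≤ X ∧ HasSolutions k ζ η X 1} := by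
      refine ⟨max (n:ℝ) 1, rfl, ?_⟩
      intro X₀
      obtain ⟨X, h1, _, h3⟩ := key_exists k hk ζ h2 (max (n:ℝ) 1) (le_max_right _ _) X₀
      exact ⟨X, h1, h3⟩
    have hle : ENNReal.ofReal (max (n:ℝ) 1) ≤ lambdaVec k 1 ζ := le_sSup hmem
    have hge : (n : ℝ≥0∞) ≤ lambdaVec k 1 ζ := by
      refine le_trans ?_ hle
      rw [← ENNReal.ofReal_natCast n]
      exact ENNReal.ofReal_le_ofReal (le_max_left _ _)
    exact absurd hn (not_lt.mpr hge)
end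

section
/- Let k be a positive integer and ζ an irrational real number with λ_{1,1}(ζ) ≥ k. Then λ̂_{k,1}(ζ) = 1/k. -/
open scoped ENNReal

open Real Filter

private lemma abs_pow_sub_pow (a b B : ℝ) (n : ℕ) (ha : |a| ≤ B) (hb : |b| ≤ B) :
    |a ^ (n+1) - b ^ (n+1)| ≤ (n+1) * B ^ n * |a - b| := by
  have hB : 0 ≤ B := le_trans (abs_nonneg a) ha
  rw [← geom_sum₂_mul a b (n+1), abs_mul]
  gcongr
  calc |∑ i ∈ Finset.range (n+1), a ^ i * b ^ (n + 1 - 1 - i)|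
      ≤ ∑ i ∈ Finset.range (n+1), |a ^ i * b ^ (n + 1 - 1 - i)| :=
        Finset.abs_sum_le_sum_abs _ _
    _ ≤ ∑ i ∈ Finset.range (n+1), B ^ n := by
        apply Finset.sum_le_sum
        intro i hi
        have hi' : i ≤ n := Nat.lt_succ_iff.mp (Finset.mem_range.mp hi)
        have : |a ^ i * b ^ (n + 1 - 1 - i)| = |a| ^ i * |b| ^ (n - i) := by
          simp [abs_mul, abs_pow]
        rw [this]
        calc |a| ^ i * |b| ^ (n - i) ≤ B ^ i * B ^ (n - i) := by
              gcongr <;> first | exact abs_nonneg _ | assumption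
          _ = B ^ n := by rw [← pow_add, Nat.add_sub_cancel' hi']
    _ = (n+1) * B ^ n := by rw [Finset.sum_const, Finset.card_range]; push_cast; ring

private lemma exists_pos_lb (ζ : ℝ) (hζ : Irrational ζ) (M : ℝ) :
    ∃ c, 0 < c ∧ ∀ x : ℤ, x ≠ 0 → |(x:ℝ)| ≤ M → ∀ y : ℤ, c ≤ |ζ * x - y| := by
  classical
  set T : Finset ℤ := insert 1 ((Finset.Icc (-⌈M⌉) ⌈M⌉).erase 0) with hT
  have hTne : T.Nonempty := ⟨1, Finset.mem_insert_self _ _⟩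
  set g : ℤ → ℝ := fun x => |ζ * x - round (ζ * x)| with hg
  set c : ℝ := min (T.inf' hTne g) (1/2) with hc
  have hgpos : ∀ x ∈ T, 0 < g x := by
    intro x hx
    have hx0 : x ≠ 0 := by
      rcases Finset.mem_insert.mp hx with h | h
      · simp [h]
      · exact (Finset.mem_erase.mp h).1
    have hirr : Irrational (ζ * x) := by
      simpa [mul_comm] using hζ.intCast_mul hx0
    have : ζ * x ≠ (round (ζ * x) : ℝ) := hirr.ne_int _
    simpa [hg, sub_eq_zero, abs_pos] using this
  have hcpos : 0 < c := by
    apply lt_min _ (by norm_num)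
    exact (Finset.lt_inf'_iff _).mpr hgpos
  refine ⟨c, hcpos, ?_⟩
  intro x hx0 hxM y
  by_cases hy : (1:ℝ)/2 ≤ |ζ * x - y|
  · exact le_trans (min_le_right _ _) hy
  push_neg at hy
  have hyr : y = round (ζ * x) := by
    have h1 : |ζ * x - round (ζ * x)| ≤ 1/2 := abs_sub_round _
    have : |(y:ℝ) - (round (ζ * x) : ℝ)| < 1 := by
      have := abs_sub_abs_le_abs_sub ((y:ℝ) - round (ζ*x)) 0
      calc |(y:ℝ) - round (ζ * x)| = |(ζ*x - round (ζ*x)) - (ζ*x - y)| := by ring_nf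
        _ ≤ |ζ*x - round (ζ*x)| + |ζ*x - y| := abs_sub _ _
        _ < 1/2 + 1/2 := by linarith
        _ = 1 := by norm_num
    have : |y - round (ζ * x)| < 1 := by
      have h2 : ((|y - round (ζ * x)| : ℤ) : ℝ) < 1 := by push_cast [abs_sub_comm]; push_cast at this ⊢; exact_mod_cast this
      exact_mod_cast h2
    have h3 : y - round (ζ * x) = 0 := Int.abs_lt_one_iff.mp this
    omega
  have hxT : x ∈ T := by
    apply Finset.mem_insert.mpr
    right
    refine Finset.mem_erase.mpr ⟨hx0, Finset.mem_Icc.mpr ⟨?_, ?_⟩⟩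
    · have : -(⌈M⌉:ℝ) ≤ x := by
        have := abs_le.mp hxM
        have hM : M ≤ ⌈M⌉ := Int.le_ceil M
        push_cast; linarith [this.1]
      exact_mod_cast this
    · have : (x:ℝ) ≤ ⌈M⌉ := by
        have := abs_le.mp hxM
        have hM : M ≤ ⌈M⌉ := Int.le_ceil M
        push_cast; linarith [this.2]
      exact_mod_cast this
  calc c ≤ T.inf' hTne g := min_le_left _ _
    _ ≤ g x := Finset.inf'_le _ hxT
    _ = |ζ * x - y| := by rw [hg, hyr]

private lemma dirichlet_box (k : ℕ) (ζ : Fin k → ℝ) (Q : ℕ) (hQ : 1 ≤ Q) :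
    ∃ x : ℤ, 1 ≤ x ∧ x ≤ (Q:ℤ)^k ∧ ∀ m : Fin k, ∃ y : ℤ, |ζ m * x - y| ≤ 1/Q := by
  classical
  have hQR : (0:ℝ) < Q := by exact_mod_cast hQ
  set f : Fin (Q^k + 1) → (Fin k → Fin Q) := fun n m =>
    ⟨(⌊Int.fract (ζ m * n) * Q⌋).toNat, by
      have h0 : (0:ℝ) ≤ Int.fract (ζ m * n) * Q := mul_nonneg (Int.fract_nonneg _) hQR.le
      have h1 : Int.fract (ζ m * n) * Q < Q := by
        have := Int.fract_lt_one (ζ m * n)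
        nlinarith
      have h2 : ⌊Int.fract (ζ m * n) * Q⌋ < (Q:ℤ) := Int.floor_lt.mpr (by exact_mod_cast h1)
      have h3 : 0 ≤ ⌊Int.fract (ζ m * n) * Q⌋ := Int.floor_nonneg.mpr h0
      omega⟩ with hf
  have hcard : Fintype.card (Fin k → Fin Q) < Fintype.card (Fin (Q^k + 1)) := by
    simp [Fintype.card_fun]
  obtain ⟨n₁, n₂, hne, hfe⟩ := Fintype.exists_ne_map_eq_of_card_lt f hcard
  suffices H : ∀ a b : Fin (Q^k + 1), a < b → f a = f b →
      ∃ x : ℤ, 1 ≤ x ∧ x ≤ (Q:ℤ)^k ∧ ∀ m : Fin k, ∃ y : ℤ, |ζ m * x - y| ≤ 1/Q by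
    rcases lt_or_gt_of_ne hne with hlt | hlt
    · exact H n₁ n₂ hlt hfe
    · exact H n₂ n₁ hlt hfe.symm
  intro a b hab hfab
  have hab' : (a:ℕ) < (b:ℕ) := hab
  refine ⟨(b:ℤ) - (a:ℤ), by omega, ?_, ?_⟩
  · have hb : (b:ℕ) ≤ Q^k := Nat.lt_succ_iff.mp b.isLt
    have : ((b:ℕ):ℤ) ≤ (Q:ℤ)^k := by exact_mod_cast hb
    omega
  · intro m
    refine ⟨⌊ζ m * b⌋ - ⌊ζ m * a⌋, ?_⟩
    have hdiff : ζ m * ((b:ℤ) - (a:ℤ) : ℤ) - ((⌊ζ m * b⌋ - ⌊ζ m * a⌋ : ℤ) : ℝ)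
        = Int.fract (ζ m * b) - Int.fract (ζ m * a) := by
      unfold Int.fract
      push_cast
      ring
    rw [hdiff]
    -- floors of fract * Q agree
    have hfm : (f a m : ℕ) = (f b m : ℕ) := by rw [hfab]
    have hfl : ⌊Int.fract (ζ m * a) * Q⌋ = ⌊Int.fract (ζ m * b) * Q⌋ := by
      have h3a : 0 ≤ ⌊Int.fract (ζ m * a) * Q⌋ :=
        Int.floor_nonneg.mpr (mul_nonneg (Int.fract_nonneg _) hQR.le)
      have h3b : 0 ≤ ⌊Int.fract (ζ m * b) * Q⌋ :=
        Int.floor_nonneg.mpr (mul_nonneg (Int.fract_nonneg _) hQR.le)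
      have : (⌊Int.fract (ζ m * a) * Q⌋).toNat = (⌊Int.fract (ζ m * b) * Q⌋).toNat := hfm
      omega
    have hA := Int.fract_nonneg (Int.fract (ζ m * a) * Q)
    have hA' := Int.fract_lt_one (Int.fract (ζ m * a) * Q)
    have hB := Int.fract_nonneg (Int.fract (ζ m * b) * Q)
    have hB' := Int.fract_lt_one (Int.fract (ζ m * b) * Q)
    have hsub : |Int.fract (ζ m * b) * Q - Int.fract (ζ m * a) * Q| < 1 := by
      have e1 : Int.fract (ζ m * a) * Q = Int.fract (Int.fract (ζ m * a) * Q) + ⌊Int.fract (ζ m * a) * Q⌋ :=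
        (Int.fract_add_floor _).symm
      have e2 : Int.fract (ζ m * b) * Q = Int.fract (Int.fract (ζ m * b) * Q) + ⌊Int.fract (ζ m * b) * Q⌋ :=
        (Int.fract_add_floor _).symm
      rw [abs_lt]
      constructor <;> [rw [e1, e2, hfl]; rw [e1, e2, hfl]] <;> linarith
    rw [abs_le]
    have h1 : |Int.fract (ζ m * b) - Int.fract (ζ m * a)| * Q < 1 := by
      rw [← abs_of_pos hQR, ← abs_mul]
      calc |(Int.fract (ζ m * b) - Int.fract (ζ m * a)) * Q|
          = |Int.fract (ζ m * b) * Q - Int.fract (ζ m * a) * Q| := by ring_nf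
        _ < 1 := hsub
    have h2 : |Int.fract (ζ m * b) - Int.fract (ζ m * a)| ≤ 1/Q := by
      rw [le_div_iff₀ hQR]
      exact h1.le
    rw [abs_le] at h2
    exact h2

private lemma lower_uniform (k : ℕ) (hk : 0 < k) (ζ : Fin k → ℝ) (η : ℝ)
    (h0 : 0 < η) (h1 : η < 1/k) :
    ∃ X₀ : ℝ, ∀ X : ℝ, X₀ ≤ X → HasSolutions k ζ η X 1 := by
  have hkR : (0:ℝ) < k := by exact_mod_cast hk
  have hexp1 : (0:ℝ) < 1/k := by positivity
  have hexp2 : (0:ℝ) < 1/k - η := by linarith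
  have ev : ∀ᶠ X : ℝ in atTop, (1:ℝ) ≤ X ∧ (2:ℝ) ≤ X ^ ((1:ℝ)/k) ∧ (2:ℝ) ≤ X ^ ((1:ℝ)/k - η) := by
    filter_upwards [eventually_ge_atTop (1:ℝ),
      (tendsto_rpow_atTop hexp1).eventually_ge_atTop 2,
      (tendsto_rpow_atTop hexp2).eventually_ge_atTop 2] with X hX1 hX2 hX3
    exact ⟨hX1, hX2, hX3⟩
  obtain ⟨X₀, hX₀⟩ := eventually_atTop.mp ev
  refine ⟨X₀, fun X hX => ?_⟩
  obtain ⟨hX1, hX2, hX3⟩ := hX₀ X hX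
  have hXpos : (0:ℝ) < X := by linarith
  set Q : ℕ := ⌊X ^ ((1:ℝ)/k)⌋₊ with hQdef
  have hQ1 : 1 ≤ Q := by
    rw [hQdef]
    have := Nat.le_floor (by exact_mod_cast hX2 : ((2:ℕ):ℝ) ≤ X ^ ((1:ℝ)/k))
    omega
  have hQpos : (0:ℝ) < Q := by exact_mod_cast hQ1
  have hQle : (Q:ℝ) ≤ X ^ ((1:ℝ)/k) := Nat.floor_le (by positivity)
  have hQpow : ((Q:ℝ))^k ≤ X := by
    calc ((Q:ℝ))^k ≤ (X ^ ((1:ℝ)/k))^k := by gcongr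
      _ = X := by
        rw [← Real.rpow_natCast (X ^ ((1:ℝ)/k)) k, ← Real.rpow_mul hXpos.le]
        rw [one_div, inv_mul_cancel₀ (by exact_mod_cast hk.ne' : (k:ℝ) ≠ 0), Real.rpow_one]
  have hQlb : X ^ ((1:ℝ)/k) / 2 ≤ (Q:ℝ) := by
    have := Nat.sub_one_lt_floor (X ^ ((1:ℝ)/k))
    rw [← hQdef] at this
    linarith
  have hQinv : 1/(Q:ℝ) ≤ X ^ (-η) := by
    have h4 : X ^ (-η) = X ^ ((1:ℝ)/k - η) * X ^ (-((1:ℝ)/k)) := by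
      rw [← Real.rpow_add hXpos]; ring_nf
    have h5 : (0:ℝ) < X ^ ((1:ℝ)/k) := by positivity
    have h6 : 1/(Q:ℝ) ≤ 2 / X ^ ((1:ℝ)/k) := by
      rw [div_le_div_iff₀ hQpos h5]
      nlinarith
    calc 1/(Q:ℝ) ≤ 2 / X ^ ((1:ℝ)/k) := h6
      _ = 2 * X ^ (-((1:ℝ)/k)) := by rw [Real.rpow_neg hXpos.le]; ring
      _ ≤ X ^ ((1:ℝ)/k - η) * X ^ (-((1:ℝ)/k)) := by
          have : (0:ℝ) < X ^ (-((1:ℝ)/k)) := by positivity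
          nlinarith
      _ = X ^ (-η) := h4.symm
  obtain ⟨x, hx1, hx2, hx3⟩ := dirichlet_box k ζ Q hQ1
  choose y hy using hx3
  refine ⟨fun _ => Fin.cons x y, ?_, ?_⟩
  · apply linearIndependent_unique_iff.mpr
    intro hcontr
    have := congrFun hcontr 0
    rw [Fin.cons_zero] at this
    simp at this
    omega
  · intro i
    constructor
    · simp only [Fin.cons_zero]
      rw [abs_of_nonneg (by exact_mod_cast le_trans (by norm_num : (0:ℤ) ≤ 1) hx1 : (0:ℝ) ≤ (x:ℝ))]
      calc (x:ℝ) ≤ ((Q:ℤ)^k : ℤ) := by exact_mod_cast hx2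
        _ = ((Q:ℝ))^k := by push_cast; ring
        _ ≤ X := hQpow
    · intro m
      simp only [Fin.cons_zero, Fin.cons_succ]
      exact (hy m).trans hQinv

private lemma good_approx (ζ : ℝ) (hζ : Irrational ζ) (k : ℕ) (hk : 0 < k)
    (h : (k : ℝ≥0∞) ≤ lambdaPow 1 1 ζ) (η₁ : ℝ) (h0 : 0 < η₁) (h1 : η₁ < k) (M : ℝ) :
    ∃ q p : ℤ, 1 ≤ q ∧ M ≤ (q:ℝ) ∧ IsCoprime p q ∧ |ζ * q - p| ≤ (q:ℝ) ^ (-η₁) := by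
  obtain ⟨c, hc, hclb⟩ := exists_pos_lb ζ hζ (max M 1)
  -- extract an approximation from lambdaPow 1 1 ζ ≥ k
  have hofk : (k : ℝ≥0∞) = ENNReal.ofReal (k:ℝ) := (ENNReal.ofReal_natCast k).symm
  have hlt : ENNReal.ofReal η₁ < lambdaPow 1 1 ζ := by
    apply lt_of_lt_of_le _ h
    rw [hofk]
    exact (ENNReal.ofReal_lt_ofReal_iff (by exact_mod_cast hk)).mpr h1
  rw [lambdaPow, lambdaVec] at hlt
  obtain ⟨e, ⟨η₂, rfl, harb⟩, helt⟩ := lt_sSup_iff.mp hlt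
  have hη₂ : η₁ < η₂ := by
    by_contra hcon
    push_neg at hcon
    exact absurd (ENNReal.ofReal_le_ofReal hcon) (not_le.mpr helt)
  set X₁ : ℝ := max 2 ((c⁻¹) ^ (η₁⁻¹) + 1) with hX₁
  obtain ⟨X, hXX₁, v, hli, hsol⟩ := harb X₁
  have hX2 : (2:ℝ) ≤ X := le_trans (le_max_left _ _) hXX₁
  have hX1 : (1:ℝ) < X := by linarith
  obtain ⟨hb, hball⟩ := hsol 0
  have hb2 := hball 0
  simp only [pow_one, Fin.val_zero, Nat.zero_add, zero_add, Fin.isValue] at hb2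
  set x : ℤ := v 0 0 with hxdef
  set y : ℤ := v 0 (0 : Fin 1).succ with hydef
  -- the approximation error bounds
  have hXη : X ^ (-η₂) ≤ X ^ (-η₁) :=
    Real.rpow_le_rpow_of_exponent_le hX1.le (by linarith)
  have hXc : X ^ (-η₁) < c := by
    have hcpow : (0:ℝ) < (c⁻¹) ^ (η₁⁻¹) := Real.rpow_pos_of_pos (by positivity) _
    have hXgt : (c⁻¹) ^ (η₁⁻¹) < X := by
      have := le_trans (le_max_right 2 ((c⁻¹) ^ (η₁⁻¹) + 1)) hXX₁
      linarith
    calc X ^ (-η₁) < ((c⁻¹) ^ (η₁⁻¹)) ^ (-η₁) := by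
          apply Real.rpow_lt_rpow_of_neg hcpow hXgt (by linarith)
      _ = c := by
          rw [← Real.rpow_mul (by positivity : (0:ℝ) ≤ c⁻¹)]
          rw [(by field_simp : η₁⁻¹ * (-η₁) = -1), Real.rpow_neg_one, inv_inv]
  -- x ≠ 0
  have hxne : x ≠ 0 := by
    intro hx0
    have hXlt1 : X ^ (-η₂) < 1 := by
      calc X ^ (-η₂) < X ^ (0:ℝ) := Real.rpow_lt_rpow_of_exponent_lt hX1 (by linarith)
        _ = 1 := Real.rpow_zero X
    have hy0 : y = 0 := by
      have hx0' : ((x:ℤ):ℝ) = 0 := by rw [hx0]; norm_num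
      rw [hx0'] at hb2
      have h5 : |(y:ℝ)| < 1 := by
        rw [(by ring : ζ * 0 - (y:ℝ) = -(y:ℝ)), abs_neg] at hb2
        exact lt_of_le_of_lt hb2 hXlt1
      have h6 : |y| < 1 := by exact_mod_cast h5
      exact Int.abs_lt_one_iff.mp h6
    have hv0 : v 0 = 0 := by
      funext j
      fin_cases j
      · exact hx0
      · exact hy0
    exact hli.ne_zero 0 hv0
  -- normalize sign
  obtain ⟨q₀, p₀, hq₀, habs, hq₀le⟩ : ∃ q₀ p₀ : ℤ, 0 < q₀ ∧ |ζ * (q₀:ℝ) - p₀| = |ζ * x - y| ∧ (q₀:ℝ) ≤ X := by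
    rcases hxne.lt_or_gt with hneg | hpos
    · refine ⟨-x, -y, by omega, ?_, ?_⟩
      · push_cast
        rw [← abs_neg]
        ring_nf
      · rw [hxdef] at hneg ⊢
        have := abs_le.mp hb
        push_cast
        linarith [this.1]
    · refine ⟨x, y, hpos, rfl, ?_⟩
      have := abs_le.mp hb
      exact this.2
  have hδ : |ζ * q₀ - p₀| ≤ X ^ (-η₂) := by rw [habs]; exact hb2
  have hq₀1 : (1:ℝ) ≤ q₀ := by exact_mod_cast hq₀
  -- reduce to coprime
  set d : ℕ := Int.gcd p₀ q₀ with hd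
  have hdpos : 0 < d := Int.gcd_pos_of_ne_zero_right p₀ (by omega)
  have hdq : (d:ℤ) ∣ q₀ := Int.gcd_dvd_right _ _
  have hdp : (d:ℤ) ∣ p₀ := Int.gcd_dvd_left _ _
  set q : ℤ := q₀ / d with hqdef
  set p : ℤ := p₀ / d with hpdef
  have hq₀eq : q₀ = d * q := (Int.mul_ediv_cancel' hdq).symm
  have hp₀eq : p₀ = d * p := (Int.mul_ediv_cancel' hdp).symm
  have hqpos : 0 < q := by
    rcases le_or_gt q 0 with hle | hlt
    · exfalso; nlinarith [hq₀eq, (by exact_mod_cast hdpos : (0:ℤ) < (d:ℤ))]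
    · exact hlt
  have hcop : IsCoprime p q := by
    rw [Int.isCoprime_iff_gcd_eq_one]
    exact Int.gcd_div_gcd_div_gcd (by omega)
  have hqq₀ : q ≤ q₀ := by
    have hd1 : (1:ℤ) ≤ d := by exact_mod_cast hdpos
    nlinarith
  have herr : |ζ * q - p| ≤ |ζ * q₀ - p₀| := by
    have : ζ * q₀ - p₀ = d * (ζ * q - p) := by
      rw [hq₀eq, hp₀eq]; push_cast; ring
    rw [this, abs_mul, abs_of_nonneg (by positivity : (0:ℝ) ≤ ((d:ℕ):ℝ))]
    have hd1 : (1:ℝ) ≤ ((d:ℕ):ℝ) := by exact_mod_cast hdpos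
    nlinarith [abs_nonneg (ζ * (q:ℝ) - p)]
  have hqR : (1:ℝ) ≤ (q:ℝ) := by exact_mod_cast hqpos
  have hfinal : |ζ * q - p| ≤ (q:ℝ) ^ (-η₁) := by
    calc |ζ * q - p| ≤ |ζ * q₀ - p₀| := herr
      _ ≤ X ^ (-η₂) := hδ
      _ ≤ X ^ (-η₁) := hXη
      _ ≤ (q₀:ℝ) ^ (-η₁) := Real.rpow_le_rpow_of_nonpos (by linarith) hq₀le (by linarith)
      _ ≤ (q:ℝ) ^ (-η₁) := Real.rpow_le_rpow_of_nonpos (by linarith) (by exact_mod_cast hqq₀) (by linarith)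
  have hqM : M ≤ (q:ℝ) := by
    by_contra hcon
    push_neg at hcon
    have hqle : |(q:ℝ)| ≤ max M 1 := by
      rw [abs_of_pos (by linarith : (0:ℝ) < (q:ℝ))]
      rcases le_or_gt (q:ℝ) 1 with h' | h'
      · exact le_trans h' (le_max_right _ _)
      · exact le_trans hcon.le (le_max_left _ _)
    have := hclb q (by omega) hqle p
    have hlt2 : |ζ * q - p| < c := lt_of_le_of_lt (herr.trans hδ) (lt_of_le_of_lt hXη hXc)
    linarith
  exact ⟨q, p, hqpos, hqM, hcop, hfinal⟩

set_option maxHeartbeats 2000000 in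
private lemma not_uniform (k : ℕ) (hk : 0 < k) (ζ : ℝ) (hζ : Irrational ζ)
    (h : (k : ℝ≥0∞) ≤ lambdaPow 1 1 ζ) (η : ℝ) (hη : 1/(k:ℝ) < η)
    (X₀ : ℝ) (hunif : ∀ X : ℝ, X₀ ≤ X → HasSolutions k (fun i => ζ ^ ((i:ℕ)+1)) η X 1) :
    False := by
  have hkR : (0:ℝ) < k := by exact_mod_cast hk
  have hη0 : 0 < η := lt_trans (by positivity) hη
  have hkη : 1 < (k:ℝ) * η := by
    rw [div_lt_iff₀ hkR] at hη; linarith [mul_comm η (k:ℝ)]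
  set δ : ℝ := ((k:ℝ) * η - 1) / (2 * ((k:ℝ) * η)) with hδdef
  have hδ0 : 0 < δ := by apply div_pos <;> nlinarith
  have hδhalf : δ < 1/2 := by
    rw [div_lt_iff₀ (by nlinarith)]; nlinarith
  set δ₂ : ℝ := (k:ℝ) * (1 - δ) * η - 1 with hδ₂def
  have hδ₂0 : 0 < δ₂ := by
    have : (k:ℝ) * (1 - δ) * η = ((k:ℝ)*η + 1)/2 := by
      rw [hδdef]
      field_simp
      ring
    rw [hδ₂def, this]; linarith
  set ε : ℝ := (k:ℝ) * δ / 2 with hεdef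
  have hε0 : 0 < ε := by positivity
  have hεk : ε < (k:ℝ) := by
    rw [hεdef]; nlinarith
  set C : ℝ := |ζ| + 1 with hCdef
  have hC1 : (1:ℝ) ≤ C := by rw [hCdef]; have := abs_nonneg ζ; linarith
  set K : ℝ := (k:ℝ) * C ^ k with hKdef
  have hK0 : 0 < K := by positivity
  -- eventual conditions on q
  have ev : ∀ᶠ t : ℝ in atTop, (2:ℝ) ≤ t ∧ X₀ ≤ t ^ ((k:ℝ)*(1-δ)) ∧ (2:ℝ) ≤ t ^ ((k:ℝ)*(1-δ))
      ∧ K * t ^ (-((k:ℝ)*δ/2)) + t ^ (-δ₂) < 1 := by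
    have hexp : (0:ℝ) < (k:ℝ)*(1-δ) := by nlinarith
    have t1 := (tendsto_rpow_atTop hexp).eventually_ge_atTop X₀
    have t2 := (tendsto_rpow_atTop hexp).eventually_ge_atTop 2
    have t3 : Tendsto (fun t : ℝ => K * t ^ (-((k:ℝ)*δ/2)) + t ^ (-δ₂)) atTop (nhds (K * 0 + 0)) := by
      exact ((tendsto_rpow_neg_atTop (by positivity)).const_mul K).add
        (tendsto_rpow_neg_atTop hδ₂0)
    have t4 : ∀ᶠ t : ℝ in atTop, K * t ^ (-((k:ℝ)*δ/2)) + t ^ (-δ₂) < 1 := by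
      have := t3.eventually_lt_const (by norm_num : K * 0 + 0 < 1)
      exact this
    filter_upwards [eventually_ge_atTop (2:ℝ), t1, t2, t4] with t h1 h2 h3 h4
    exact ⟨h1, h2, h3, h4⟩
  obtain ⟨M, hM⟩ := eventually_atTop.mp ev
  obtain ⟨q, p, hq1, hqM, hcop, hqapprox⟩ :=
    good_approx ζ hζ k hk h ((k:ℝ) - ε) (by linarith) (by linarith) M
  set Qr : ℝ := ((q:ℤ):ℝ) with hQrdef
  obtain ⟨hQ2, hXX₀, hX2, hsmall⟩ := hM Qr hqM
  have hQ1 : (1:ℝ) ≤ Qr := by linarith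
  have hQ0 : (0:ℝ) < Qr := by linarith
  set X : ℝ := Qr ^ ((k:ℝ)*(1-δ)) with hXdef
  have hX1 : (1:ℝ) < X := by linarith
  have hX0 : (0:ℝ) < X := by linarith
  -- the uniform solution at X
  obtain ⟨v, hli, hsol⟩ := hunif X hXX₀
  obtain ⟨hb, hball⟩ := hsol 0
  set x : ℤ := v 0 0 with hxdef
  have hXη1 : X ^ (-η) < 1 := by
    calc X ^ (-η) < X ^ (0:ℝ) := Real.rpow_lt_rpow_of_exponent_lt hX1 (by linarith)
      _ = 1 := Real.rpow_zero X
  have hxne : x ≠ 0 := by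
    intro hx0
    apply hli.ne_zero 0
    funext j
    refine Fin.cases ?_ (fun m => ?_) j
    · exact hx0
    · have hm := hball m
      rw [hx0] at hm
      norm_num at hm
      have h5 : |((v 0 m.succ : ℤ):ℝ)| < 1 := lt_of_le_of_lt hm hXη1
      have h6 : |v 0 m.succ| < 1 := by exact_mod_cast h5
      simpa using Int.abs_lt_one_iff.mp h6
  set θ : ℝ := ζ * Qr - p with hθdef
  have hPT : (p:ℝ) + θ = ζ * Qr := by rw [hθdef]; ring
  have hθ1 : |θ| ≤ 1 := by
    calc |θ| ≤ Qr ^ (-((k:ℝ) - ε)) := hqapprox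
      _ ≤ 1 := Real.rpow_le_one_of_one_le_of_nonpos hQ1 (by linarith)
  have hPbound : |(p:ℝ)| ≤ C * Qr := by
    have : |(p:ℝ)| ≤ |ζ * Qr| + |θ| := by
      rw [hθdef]
      have e : ζ*Qr - (ζ*Qr - (p:ℝ)) = (p:ℝ) := by ring
      calc |(p:ℝ)| = |ζ*Qr - (ζ*Qr - (p:ℝ))| := by rw [e]
        _ ≤ |ζ*Qr| + |ζ*Qr - (p:ℝ)| := abs_sub _ _
    have h7 : |ζ * Qr| = |ζ| * Qr := by rw [abs_mul, abs_of_pos hQ0]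
    rw [hCdef]
    nlinarith
  have hPTbound : |(p:ℝ) + θ| ≤ C * Qr := by
    rw [hPT, abs_mul, abs_of_pos hQ0, hCdef]
    nlinarith
  -- rpow bookkeeping
  have hXval : X ^ (-η) = Qr ^ (-δ₂) / Qr := by
    rw [hXdef, ← Real.rpow_mul hQ0.le]
    have e : (k:ℝ)*(1-δ)*(-η) = -δ₂ + (-1) := by rw [hδ₂def]; ring
    rw [e, Real.rpow_add hQ0, Real.rpow_neg_one]
    ring
  have hcomb : X * Qr ^ (-((k:ℝ) - ε)) = Qr ^ (-((k:ℝ)*δ/2)) := by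
    rw [hXdef, ← Real.rpow_add hQ0]
    congr 1
    rw [hεdef]; ring
  -- inductive divisibility
  have claim : ∀ m : ℕ, m ≤ k → (q:ℤ)^m ∣ x := by
    intro m
    induction m with
    | zero => intro _; simpa using one_dvd x
    | succ m ih =>
      intro hmk
      obtain ⟨s, hs⟩ := ih (by omega)
      have hmk2 : m < k := by omega
      have hm := hball ⟨m, hmk2⟩
      simp only at hm
      set y : ℤ := v 0 (Fin.succ ⟨m, hmk2⟩) with hy
      set S : ℝ := (s:ℝ) with hSdef
      set P : ℝ := (p:ℝ) with hPdef
      have hQrm : (0:ℝ) < Qr ^ m := by positivity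
      have hxval : (x:ℝ) = Qr ^ m * S := by rw [hs]; push_cast; ring
      have hSle : |S| ≤ X / Qr ^ m := by
        rw [le_div_iff₀ hQrm]
        calc |S| * Qr ^ m = |(x:ℝ)| := by
              rw [hxval, abs_mul, abs_of_pos hQrm]; ring
          _ ≤ X := hb
      have hzeta : ζ ^ (m+1) * (x:ℝ) = S * (P + θ) ^ (m+1) / Qr := by
        rw [hxval, hPT]
        field_simp
        ring
      have hpowbound : |(P + θ) ^ (m+1) - P ^ (m+1)| ≤ ((m:ℝ)+1) * (C*Qr)^m * |θ| := by
        have := abs_pow_sub_pow (P + θ) P (C*Qr) m hPTbound hPbound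
        simpa using this
      have habs2 : |S * ((P + θ) ^ (m+1) - P ^ (m+1))| ≤ K * X * |θ| := by
        rw [abs_mul]
        calc |S| * |(P + θ) ^ (m+1) - P ^ (m+1)|
            ≤ (X / Qr ^ m) * (((m:ℝ)+1) * (C*Qr)^m * |θ|) := by
              apply mul_le_mul hSle hpowbound (abs_nonneg _)
              positivity
          _ = ((m:ℝ)+1) * C^m * X * |θ| := by
              rw [mul_pow]
              field_simp
          _ ≤ (k:ℝ) * C^k * X * |θ| := by
              have h1 : ((m:ℝ)+1) ≤ (k:ℝ) := by exact_mod_cast hmk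
              have h2 : C^m ≤ C^k := pow_le_pow_right₀ hC1 (by omega)
              have h3 : (0:ℝ) ≤ C^m := by positivity
              have h4 : (0:ℝ) ≤ X * |θ| := mul_nonneg hX0.le (abs_nonneg θ)
              have h5 : ((m:ℝ)+1) * C^m ≤ (k:ℝ) * C^k :=
                mul_le_mul h1 h2 h3 (le_of_lt hkR)
              calc ((m:ℝ)+1) * C^m * X * |θ| = (((m:ℝ)+1) * C^m) * (X * |θ|) := by ring
                _ ≤ ((k:ℝ) * C^k) * (X * |θ|) := mul_le_mul_of_nonneg_right h5 h4
                _ = (k:ℝ) * C^k * X * |θ| := by ring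
          _ = K * X * |θ| := by rw [hKdef]
      have herr : |ζ ^ (m+1) * (x:ℝ) - S * P ^ (m+1) / Qr| ≤ K * X * |θ| / Qr := by
        rw [hzeta,
          (by ring : S * (P + θ) ^ (m+1) / Qr - S * P ^ (m+1) / Qr
            = S * ((P + θ) ^ (m+1) - P ^ (m+1)) / Qr),
          abs_div, abs_of_pos hQ0]
        exact div_le_div_of_nonneg_right habs2 hQ0.le
      have hKXθ : K * X * |θ| / Qr ≤ K * Qr ^ (-((k:ℝ)*δ/2)) / Qr := by
        have hXθ : X * |θ| ≤ Qr ^ (-((k:ℝ)*δ/2)) := by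
          calc X * |θ| ≤ X * Qr ^ (-((k:ℝ) - ε)) :=
                mul_le_mul_of_nonneg_left hqapprox hX0.le
            _ = Qr ^ (-((k:ℝ)*δ/2)) := hcomb
        have h9 : K * X * |θ| ≤ K * Qr ^ (-((k:ℝ)*δ/2)) := by
          calc K * X * |θ| = K * (X * |θ|) := by ring
            _ ≤ K * Qr ^ (-((k:ℝ)*δ/2)) := mul_le_mul_of_nonneg_left hXθ hK0.le
        exact div_le_div_of_nonneg_right h9 hQ0.le
      have htri : |S * P ^ (m+1) / Qr - (y:ℝ)| < 1 / Qr := by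
        have h4 : |S * P^(m+1)/Qr - (y:ℝ)|
            ≤ |ζ^(m+1)*(x:ℝ) - S*P^(m+1)/Qr| + |ζ^(m+1)*(x:ℝ) - (y:ℝ)| := by
          have e : S * P^(m+1)/Qr - (y:ℝ)
              = -(ζ^(m+1)*(x:ℝ) - S*P^(m+1)/Qr) + (ζ^(m+1)*(x:ℝ) - (y:ℝ)) := by ring
          rw [e]
          refine le_trans (abs_add_le _ _) ?_
          rw [abs_neg]
        calc |S * P^(m+1)/Qr - (y:ℝ)|
            ≤ |ζ^(m+1)*(x:ℝ) - S*P^(m+1)/Qr| + |ζ^(m+1)*(x:ℝ) - (y:ℝ)| := h4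
          _ ≤ K * Qr ^ (-((k:ℝ)*δ/2)) / Qr + X ^ (-η) := add_le_add (herr.trans hKXθ) hm
          _ = (K * Qr ^ (-((k:ℝ)*δ/2)) + Qr ^ (-δ₂)) / Qr := by rw [hXval]; ring
          _ < 1 / Qr := by
              rw [div_lt_div_iff₀ hQ0 hQ0]
              exact mul_lt_mul_of_pos_right hsmall hQ0
      -- integer step
      have hint : s * p^(m+1) = y * q := by
        have h6 : |S * P^(m+1) - (y:ℝ) * Qr| < 1 := by
          have e : S * P^(m+1) - (y:ℝ)*Qr = (S * P^(m+1)/Qr - (y:ℝ)) * Qr := by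
            field_simp
          rw [e, abs_mul, abs_of_pos hQ0]
          calc |S * P^(m+1)/Qr - (y:ℝ)| * Qr < (1/Qr) * Qr :=
                mul_lt_mul_of_pos_right htri hQ0
            _ = 1 := by field_simp
        have e2 : ((s * p^(m+1) - y*q : ℤ):ℝ) = S * P^(m+1) - (y:ℝ)*Qr := by
          rw [hSdef, hPdef, hQrdef]
          push_cast
          ring
        have h7 : |(s * p^(m+1) - y*q : ℤ)| < 1 := by
          rw [← e2] at h6
          exact_mod_cast h6
        have h8 := Int.abs_lt_one_iff.mp h7
        omega
      have hdvdq : (q:ℤ) ∣ s := by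
        have hd1 : (q:ℤ) ∣ s * p^(m+1) := ⟨y, by rw [hint]; ring⟩
        exact (hcop.symm.pow_right).dvd_of_dvd_mul_right hd1
      obtain ⟨t, ht⟩ := hdvdq
      exact ⟨t, by rw [hs, ht]; ring⟩
  -- final contradiction
  have hdvd := claim k le_rfl
  have hqk : (q:ℤ)^k ≤ |x| :=
    Int.le_of_dvd (abs_pos.mpr hxne) ((dvd_abs _ _).mpr hdvd)
  have hXlt : X < Qr ^ (k:ℕ) := by
    have h5 : X < Qr ^ ((k:ℕ):ℝ) := by
      rw [hXdef]
      apply Real.rpow_lt_rpow_of_exponent_lt (by linarith) (by nlinarith)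
    rwa [Real.rpow_natCast] at h5
  have hxX : |(x:ℝ)| ≤ X := hb
  have hcast : ((q^k : ℤ):ℝ) = Qr ^ (k:ℕ) := by push_cast; ring
  have hqkR : Qr ^ (k:ℕ) ≤ |(x:ℝ)| := by
    rw [← hcast]
    have : ((|x| : ℤ):ℝ) = |(x:ℝ)| := by push_cast; ring
    rw [← this]
    exact_mod_cast hqk
  linarith

private lemma sup_ge (k : ℕ) (hk : 0 < k) (S : Set ℝ≥0∞)
    (hmem : ∀ η : ℝ, 0 < η → η < 1/(k:ℝ) → ENNReal.ofReal η ∈ S) :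
    1/((k:ℝ≥0∞)) ≤ sSup S := by
  have hkR : (0:ℝ) < k := by exact_mod_cast hk
  have honek : 1 / ((k:ℝ≥0∞)) = ENNReal.ofReal (1/(k:ℝ)) := by
    rw [one_div, one_div, ← ENNReal.ofReal_natCast k, ← ENNReal.ofReal_inv_of_pos hkR]
  by_contra hcon
  push_neg at hcon
  have hktop : 1 / ((k:ℝ≥0∞)) ≠ ⊤ := by rw [honek]; exact ENNReal.ofReal_ne_top
  have hne : sSup S ≠ ⊤ := ne_top_of_lt hcon
  have hs0 : 0 ≤ (sSup S).toReal := ENNReal.toReal_nonneg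
  have hslt : (sSup S).toReal < 1/(k:ℝ) := by
    have := (ENNReal.toReal_lt_toReal hne hktop).mpr hcon
    rwa [honek, ENNReal.toReal_ofReal (by positivity)] at this
  have hmem2 := hmem (((sSup S).toReal + 1/(k:ℝ))/2) (by positivity) (by linarith)
  have hle2 := le_sSup hmem2
  rw [← ENNReal.ofReal_toReal hne] at hle2
  have h9 := (ENNReal.ofReal_le_ofReal_iff hs0).mp hle2
  rw [ENNReal.toReal_ofReal hs0] at h9
  linarith

/-- Corollary: if `λ_{1,1}(ζ) ≥ k` for an irrational real `ζ`, then `λ̂_{k,1}(ζ) = 1/k`. -/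
theorem stmt7 (k : ℕ) (hk : 0 < k) (ζ : ℝ) (hζ : Irrational ζ)
    (h : (k : ℝ≥0∞) ≤ lambdaPow 1 1 ζ) :
    lambdaHatPow k 1 ζ = 1 / (k : ℝ≥0∞) := by
  have hkR : (0:ℝ) < k := by exact_mod_cast hk
  have honek : 1 / ((k:ℝ≥0∞)) = ENNReal.ofReal (1/(k:ℝ)) := by
    rw [one_div, one_div, ← ENNReal.ofReal_natCast k, ← ENNReal.ofReal_inv_of_pos hkR]
  rw [lambdaHatPow, lambdaHatVec]
  apply le_antisymm
  · apply sSup_le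
    rintro e ⟨η, rfl, X₀, hunif⟩
    rcases le_or_gt η (1/(k:ℝ)) with hle | hlt
    · rw [honek]
      exact ENNReal.ofReal_le_ofReal hle
    · exact absurd hunif (fun hu => not_uniform k hk ζ hζ h η hlt X₀ hu)
  · apply sup_ge k hk
    intro η hη0 hηlt
    obtain ⟨X₀, hX₀⟩ := lower_uniform k hk (fun i => ζ ^ ((i:ℕ)+1)) η hη0 hηlt
    exact ⟨η, rfl, X₀, hX₀⟩
end

section
/- Let k be a positive integer and ζ an irrational real number with λ_{k,1}(ζ) > 1. Then λ̂_{k,1}(ζ) = 1/k. -/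
open scoped ENNReal

private lemma exists_pos_sol (k : ℕ) (ζ : ℝ) {η X : ℝ} (hX : 1 < X) (hη : 0 < η)
    (hs : HasSolutions k (fun i => ζ ^ ((i : ℕ) + 1)) η X 1) :
    ∃ w : Fin (k + 1) → ℤ, 0 < w 0 ∧ |((w 0 : ℤ) : ℝ)| ≤ X ∧
      ∀ m : Fin k, |ζ ^ ((m : ℕ) + 1) * ((w 0 : ℤ) : ℝ) - ((w m.succ : ℤ) : ℝ)| ≤ X ^ (-η) := by
  obtain ⟨v, hli, hprop⟩ := hs
  have hv0 : v 0 ≠ 0 := hli.ne_zero 0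
  obtain ⟨hb, happ⟩ := hprop 0
  have hεlt : X ^ (-η) < 1 := Real.rpow_lt_one_of_one_lt_of_neg hX (by linarith)
  have hx0 : v 0 0 ≠ 0 := by
    intro h0
    apply hv0
    funext i
    refine Fin.cases ?_ ?_ i
    · exact h0
    · intro m
      have h1 := happ m
      rw [h0] at h1
      have h2 : |((v 0 m.succ : ℤ) : ℝ)| < 1 := by
        rw [Int.cast_zero, mul_zero, zero_sub, abs_neg] at h1
        exact lt_of_le_of_lt h1 hεlt
      have h3 : |v 0 m.succ| < 1 := by exact_mod_cast h2
      have := abs_lt.mp h3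
      simp only [Pi.zero_apply]
      omega
  rcases hx0.lt_or_gt with hneg | hpos
  · refine ⟨-(v 0), ?_, ?_, ?_⟩
    · simpa using hneg
    · simpa using hb
    · intro m
      have h1 := happ m
      have h2 : |ζ ^ ((m : ℕ) + 1) * (((-(v 0)) 0 : ℤ) : ℝ) - (((-(v 0)) m.succ : ℤ) : ℝ)|
          = |ζ ^ ((m : ℕ) + 1) * ((v 0 0 : ℤ) : ℝ) - ((v 0 m.succ : ℤ) : ℝ)| := by
        simp only [Pi.neg_apply, Int.cast_neg]
        rw [← abs_neg]
        ring_nf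
      rw [h2]
      exact h1
  · exact ⟨v 0, hpos, hb, happ⟩

private lemma dirichlet_box_s8 (k : ℕ) (ζv : Fin k → ℝ) (N : ℕ) (hN : 0 < N) :
    ∃ w : Fin (k + 1) → ℤ, 0 < w 0 ∧ w 0 ≤ (N : ℤ) ^ k ∧
      ∀ m : Fin k, |ζv m * ((w 0 : ℤ) : ℝ) - ((w m.succ : ℤ) : ℝ)| < 1 / N := by
  classical
  have hN0 : (0:ℝ) < N := by exact_mod_cast hN
  set f : ℕ → (Fin k → Fin N) := fun n m =>
    ⟨⌊Int.fract (ζv m * n) * N⌋₊, by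
      rw [Nat.floor_lt (mul_nonneg (Int.fract_nonneg _) (by positivity))]
      have := Int.fract_lt_one (ζv m * n)
      nlinarith [Int.fract_nonneg (ζv m * n)]⟩ with hf
  have hcard : (Finset.univ : Finset (Fin k → Fin N)).card < (Finset.range (N ^ k + 1)).card := by
    rw [Finset.card_univ, Finset.card_range, Fintype.card_fun]
    simp
  obtain ⟨a, ha, b, hb, hab, hfab⟩ :=
    Finset.exists_ne_map_eq_of_card_lt_of_maps_to hcard (fun a _ => Finset.mem_univ (f a))
  -- wlog a < b
  have key : ∀ a b : ℕ, a ∈ Finset.range (N ^ k + 1) → b ∈ Finset.range (N ^ k + 1) →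
      a < b → f a = f b →
      ∃ w : Fin (k + 1) → ℤ, 0 < w 0 ∧ w 0 ≤ (N : ℤ) ^ k ∧
        ∀ m : Fin k, |ζv m * ((w 0 : ℤ) : ℝ) - ((w m.succ : ℤ) : ℝ)| < 1 / N := by
    intro a b ha hb hlt hfe
    set w : Fin (k + 1) → ℤ := Fin.cases ((b : ℤ) - a) (fun m => ⌊ζv m * b⌋ - ⌊ζv m * a⌋) with hw
    have hw0 : w 0 = (b : ℤ) - a := by simp [hw]
    have hwm : ∀ m : Fin k, w m.succ = ⌊ζv m * b⌋ - ⌊ζv m * a⌋ := by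
      intro m; simp [hw]
    refine ⟨w, ?_, ?_, ?_⟩
    · rw [hw0]; omega
    · rw [hw0]
      have := Finset.mem_range.mp hb
      have hbk : (b : ℤ) ≤ (N:ℤ) ^ k := by exact_mod_cast Nat.lt_succ_iff.mp this
      omega
    · intro m
      rw [hw0, hwm]
      have hfm : (⌊Int.fract (ζv m * a) * N⌋₊ : ℕ) = ⌊Int.fract (ζv m * b) * N⌋₊ := by
        have := congrFun hfe m
        exact congrArg Fin.val this
      set u := ζv m * b with hu
      set s := ζv m * a with hs
      have hid : ζv m * (((b : ℤ) - a : ℤ) : ℝ) - ((⌊u⌋ - ⌊s⌋ : ℤ) : ℝ)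
          = Int.fract u - Int.fract s := by
        rw [Int.fract, Int.fract]
        push_cast
        ring
      rw [hid]
      have h1 : ((⌊Int.fract s * N⌋₊ : ℕ) : ℝ) ≤ Int.fract s * N :=
        Nat.floor_le (mul_nonneg (Int.fract_nonneg _) (by positivity))
      have h2 : Int.fract s * N < (⌊Int.fract s * N⌋₊ : ℕ) + 1 := Nat.lt_floor_add_one _
      have h3 : ((⌊Int.fract s * N⌋₊ : ℕ) : ℝ) ≤ Int.fract u * N := by
        rw [hfm]; exact Nat.floor_le (mul_nonneg (Int.fract_nonneg _) (by positivity))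
      have h4 : Int.fract u * N < (⌊Int.fract s * N⌋₊ : ℕ) + 1 := by
        rw [hfm]; exact Nat.lt_floor_add_one _
      have hlt1 : (Int.fract s - Int.fract u) * N < 1 := by nlinarith
      have hlt2 : (Int.fract u - Int.fract s) * N < 1 := by nlinarith
      have hd1 : Int.fract s - Int.fract u < 1 / N := by rw [← lt_div_iff₀ hN0] at hlt1; exact hlt1
      have hd2 : Int.fract u - Int.fract s < 1 / N := by rw [← lt_div_iff₀ hN0] at hlt2; exact hlt2
      rw [abs_lt]
      constructor <;> linarith
  rcases lt_or_gt_of_ne hab with h | h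
  · exact key a b ha hb h hfab
  · exact key b a hb ha h hfab.symm

private lemma abs_sub_round_le' (r : ℝ) (p : ℤ) : |r - round r| ≤ |r - (p : ℝ)| := by
  rcases eq_or_ne p (round r) with h | h
  · rw [h]
  · have h0 : round r - p ≠ 0 := sub_ne_zero.mpr (Ne.symm h)
    have h1 : (1 : ℝ) ≤ |((round r : ℝ)) - (p : ℝ)| := by
      have h' : (1 : ℤ) ≤ |round r - p| := Int.one_le_abs h0
      have h'' : ((1:ℤ):ℝ) ≤ ((|round r - p| : ℤ) : ℝ) := Int.cast_le.mpr h'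
      push_cast at h''
      exact h''
    have h2 : |r - round r| ≤ 1 / 2 := abs_sub_round r
    have h3 : |(round r : ℝ) - p| ≤ |(round r : ℝ) - r| + |r - p| := abs_sub_le _ _ _
    have h4 : |(round r : ℝ) - r| = |r - round r| := abs_sub_comm _ _
    linarith

private lemma key_chain (k : ℕ) (ζ : ℝ) {q p : ℤ} (hq : 1 ≤ q)
    (hcop : IsCoprime q p) {X ε : ℝ} (hX : 1 ≤ X)
    (w : Fin (k + 1) → ℤ) (hxX : |((w 0 : ℤ) : ℝ)| ≤ X)
    (happ : ∀ m : Fin k, |ζ ^ ((m : ℕ) + 1) * ((w 0 : ℤ) : ℝ) - ((w m.succ : ℤ) : ℝ)| ≤ ε)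
    (hε : 0 ≤ ε)
    (hsmall : (q : ℝ) * ((1 + (|ζ| + 1)) * ε) + ((|ζ| + 1) ^ k + 1) * X * |ζ * q - p| < 1) :
    q ^ k ∣ w 0 := by
  set M : ℝ := |ζ| + 1 with hM
  set C : ℝ := M ^ k + 1 with hC
  have hM1 : 1 ≤ M := by have := abs_nonneg ζ; simp only [hM]; linarith
  have hζM : |ζ| ≤ M := by simp [hM]
  have hq0 : (0 : ℝ) < (q : ℝ) := by exact_mod_cast hq
  have hq0' : (1 : ℝ) ≤ (q : ℝ) := by exact_mod_cast hq
  have hδ0 : 0 ≤ |ζ * q - p| := abs_nonneg _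
  have hMk : (1:ℝ) ≤ M ^ k := one_le_pow₀ hM1
  have hC1 : (1:ℝ) ≤ C := by simp only [hC]; linarith
  have hε1 : ε ≤ 1 := by
    have hterm2 : 0 ≤ ((|ζ| + 1) ^ k + 1) * X * |ζ * q - p| := by positivity
    nlinarith [mul_nonneg (sub_nonneg.mpr hq0') (mul_nonneg (by linarith : (0:ℝ) ≤ 1 + M) hε),
      mul_nonneg (by linarith : (0:ℝ) ≤ M) hε]
  -- the sequence W
  set W : ℕ → ℤ := fun n => if h : n < k + 1 then w ⟨n, h⟩ else 0 with hWdef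
  have hW0 : W 0 = w 0 := by
    simp only [hWdef, dif_pos (Nat.succ_pos k)]
    rfl
  have hWapp : ∀ m : ℕ, m < k → |ζ ^ (m + 1) * ((w 0 : ℤ) : ℝ) - ((W (m + 1) : ℤ) : ℝ)| ≤ ε := by
    intro m hm
    have h1 : W (m + 1) = w (Fin.succ ⟨m, hm⟩) := by
      simp only [hWdef, dif_pos (Nat.succ_lt_succ hm)]
      rfl
    rw [h1]
    exact happ ⟨m, hm⟩
  have hWb : ∀ m : ℕ, m ≤ k → |((W m : ℤ) : ℝ)| ≤ C * X := by
    intro m hm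
    match m with
    | 0 =>
      rw [hW0]
      nlinarith
    | n + 1 =>
      have hn : n < k := by omega
      have h1 := hWapp n hn
      have h2 : |ζ ^ (n + 1) * ((w 0 : ℤ) : ℝ)| ≤ M ^ k * X := by
        rw [abs_mul, abs_pow]
        have e1 : |ζ| ^ (n + 1) ≤ M ^ (n + 1) := pow_le_pow_left₀ (abs_nonneg ζ) hζM _
        have e2 : M ^ (n + 1) ≤ M ^ k := pow_le_pow_right₀ hM1 (by omega)
        have e3 : (0:ℝ) ≤ |ζ| ^ (n+1) := by positivity
        nlinarith [abs_nonneg ((w 0 : ℤ) : ℝ)]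
      have h3 : |((W (n+1) : ℤ) : ℝ)| ≤ |ζ ^ (n + 1) * ((w 0 : ℤ) : ℝ)| + ε := by
        have := abs_sub_abs_le_abs_sub (ζ ^ (n + 1) * ((w 0 : ℤ) : ℝ)) ((W (n+1) : ℤ) : ℝ)
        have h4 := abs_sub_comm (ζ ^ (n + 1) * ((w 0 : ℤ) : ℝ)) ((W (n+1) : ℤ) : ℝ)
        have h5 := abs_sub_abs_le_abs_sub ((W (n+1) : ℤ) : ℝ) (ζ ^ (n + 1) * ((w 0 : ℤ) : ℝ))
        rw [← h4] at h5
        linarith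
      simp only [hC]
      nlinarith
  have hchain : ∀ m : ℕ, m + 1 ≤ k → |ζ * ((W m : ℤ) : ℝ) - ((W (m + 1) : ℤ) : ℝ)| ≤ (1 + M) * ε := by
    intro m hm
    match m with
    | 0 =>
      have h1 := hWapp 0 (by omega)
      rw [pow_one] at h1
      rw [hW0]
      nlinarith
    | n + 1 =>
      have h1 := hWapp n (by omega)
      have h2 := hWapp (n + 1) (by omega)
      have hid : ζ * ((W (n+1) : ℤ) : ℝ) - ((W (n + 2) : ℤ) : ℝ)
          = (ζ ^ (n + 2) * ((w 0 : ℤ) : ℝ) - ((W (n+2) : ℤ) : ℝ))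
            - ζ * (ζ ^ (n + 1) * ((w 0 : ℤ) : ℝ) - ((W (n+1) : ℤ) : ℝ)) := by ring
      rw [hid]
      have h3 : |(ζ ^ (n + 2) * ((w 0 : ℤ) : ℝ) - ((W (n+2) : ℤ) : ℝ))
            - ζ * (ζ ^ (n + 1) * ((w 0 : ℤ) : ℝ) - ((W (n+1) : ℤ) : ℝ))|
          ≤ |ζ ^ (n + 2) * ((w 0 : ℤ) : ℝ) - ((W (n+2) : ℤ) : ℝ)|
            + |ζ| * |ζ ^ (n + 1) * ((w 0 : ℤ) : ℝ) - ((W (n+1) : ℤ) : ℝ)| := by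
        rw [← abs_mul]
        exact abs_sub _ _
      have h4 : |ζ| * |ζ ^ (n + 1) * ((w 0 : ℤ) : ℝ) - ((W (n+1) : ℤ) : ℝ)| ≤ M * ε := by
        have := abs_nonneg (ζ ^ (n + 1) * ((w 0 : ℤ) : ℝ) - ((W (n+1) : ℤ) : ℝ))
        nlinarith [abs_nonneg ζ]
      linarith
  have hdet : ∀ m : ℕ, m + 1 ≤ k → W m * p = W (m + 1) * q := by
    intro m hm
    have hb := hWb m (by omega)
    have hc := hchain m hm
    have hid : ((W m * p - W (m + 1) * q : ℤ) : ℝ)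
        = (q : ℝ) * (ζ * ((W m : ℤ) : ℝ) - ((W (m + 1) : ℤ) : ℝ))
          - ((W m : ℤ) : ℝ) * (ζ * q - p) := by push_cast; ring
    have habs : |((W m * p - W (m + 1) * q : ℤ) : ℝ)| < 1 := by
      rw [hid]
      have t1 : |(q : ℝ) * (ζ * ((W m : ℤ) : ℝ) - ((W (m + 1) : ℤ) : ℝ))
          - ((W m : ℤ) : ℝ) * (ζ * q - p)|
          ≤ (q:ℝ) * |ζ * ((W m : ℤ) : ℝ) - ((W (m + 1) : ℤ) : ℝ)|
            + |((W m : ℤ) : ℝ)| * |ζ * q - p| := by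
        calc _ ≤ |(q : ℝ) * (ζ * ((W m : ℤ) : ℝ) - ((W (m + 1) : ℤ) : ℝ))|
            + |((W m : ℤ) : ℝ) * (ζ * q - p)| := abs_sub _ _
        _ = _ := by rw [abs_mul, abs_mul, abs_of_pos hq0]
      have t2 : (q:ℝ) * |ζ * ((W m : ℤ) : ℝ) - ((W (m + 1) : ℤ) : ℝ)| ≤ (q:ℝ) * ((1 + M) * ε) := by
        nlinarith
      have t3 : |((W m : ℤ) : ℝ)| * |ζ * q - p| ≤ C * X * |ζ * q - p| := by
        nlinarith [abs_nonneg ((W m : ℤ) : ℝ)]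
      simp only [hC] at t3 hsmall ⊢
      simp only [hM] at t2 hsmall ⊢
      linarith
    have h0 : |W m * p - W (m + 1) * q| < 1 := by exact_mod_cast habs
    have h1 := abs_lt.mp h0
    omega
  have hpow : ∀ m : ℕ, m ≤ k → w 0 * p ^ m = W m * q ^ m := by
    intro m
    induction m with
    | zero => intro _; simp [hW0]
    | succ n ih =>
      intro hm
      have h1 := ih (by omega)
      have h2 := hdet n hm
      calc w 0 * p ^ (n + 1) = (w 0 * p ^ n) * p := by ring
      _ = (W n * q ^ n) * p := by rw [h1]
      _ = (W n * p) * q ^ n := by ring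
      _ = (W (n + 1) * q) * q ^ n := by rw [h2]
      _ = W (n + 1) * q ^ (n + 1) := by ring
  have hdvd : q ^ k ∣ w 0 * p ^ k := ⟨W k, by rw [hpow k le_rfl]; ring⟩
  exact (hcop.pow).dvd_of_dvd_mul_right hdvd

private lemma hat_lower (k : ℕ) (hk : 0 < k) (ζv : Fin k → ℝ) {η : ℝ} (hη0 : 0 < η)
    (hηk : η < 1 / (k : ℝ)) : ∃ X₀ : ℝ, ∀ X : ℝ, X₀ ≤ X → HasSolutions k ζv η X 1 := by
  have hk0 : (0:ℝ) < (k:ℝ) := by exact_mod_cast hk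
  have hexp : (0:ℝ) < 1 / (k:ℝ) - η := by linarith
  have hev : ∀ᶠ X : ℝ in Filter.atTop, 2 ≤ X ^ ((1:ℝ) / k - η) :=
    (tendsto_rpow_atTop hexp).eventually_ge_atTop 2
  obtain ⟨X₀, hX₀⟩ := Filter.eventually_atTop.mp (hev.and (Filter.eventually_ge_atTop 1))
  refine ⟨X₀, fun X hX => ?_⟩
  obtain ⟨h2X, hX1⟩ := hX₀ X hX
  have hXpos : (0:ℝ) < X := by linarith
  set N : ℕ := ⌊X ^ ((1:ℝ) / k)⌋₊ with hN
  have hX1k : (1:ℝ) ≤ X ^ ((1:ℝ) / k) := Real.one_le_rpow hX1 (by positivity)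
  have hN1 : 1 ≤ N := Nat.le_floor (by exact_mod_cast hX1k)
  have hNpos : 0 < N := hN1
  obtain ⟨w, hw0, hwk, hwe⟩ := dirichlet_box_s8 k ζv N hNpos
  have hNle : (N:ℝ) ≤ X ^ ((1:ℝ) / k) := Nat.floor_le (by positivity)
  have hNX : ((N:ℝ)) ^ (k:ℕ) ≤ X := by
    calc ((N:ℝ)) ^ (k:ℕ) ≤ (X ^ ((1:ℝ)/k)) ^ (k:ℕ) := by
          exact pow_le_pow_left₀ (by positivity) hNle k
    _ = X ^ (((1:ℝ)/k) * (k:ℕ)) := by rw [← Real.rpow_natCast (X ^ ((1:ℝ)/k)) k, ← Real.rpow_mul hXpos.le]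
    _ = X := by
        rw [show ((1:ℝ)/k) * (k:ℕ) = 1 by field_simp]
        exact Real.rpow_one X
  have hXη1 : (1:ℝ) ≤ X ^ η := Real.one_le_rpow hX1 hη0.le
  have hXηN : X ^ η ≤ (N:ℝ) := by
    have hsplit : X ^ ((1:ℝ)/k) = X ^ η * X ^ ((1:ℝ)/k - η) := by
      rw [← Real.rpow_add hXpos]; ring_nf
    have h1 : X ^ η + 1 ≤ X ^ ((1:ℝ)/k) := by
      rw [hsplit]; nlinarith
    have h2 : X ^ ((1:ℝ)/k) < (N:ℝ) + 1 := Nat.lt_floor_add_one _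
    linarith
  have hinv : 1 / (N:ℝ) ≤ X ^ (-η) := by
    rw [Real.rpow_neg hXpos.le, one_div]
    exact inv_anti₀ (by positivity) hXηN
  refine ⟨fun _ => w, ?_, fun i => ⟨?_, fun m => ?_⟩⟩
  · refine linearIndependent_unique_iff.mpr ?_
    intro hcontra
    have : w 0 = 0 := by rw [hcontra]; rfl
    omega
  · have : ((w 0 : ℤ):ℝ) ≤ ((N:ℝ)) ^ (k:ℕ) := by exact_mod_cast hwk
    have h0 : (0:ℝ) < ((w 0 : ℤ):ℝ) := by exact_mod_cast hw0
    rw [abs_of_pos h0]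
    linarith
  · exact le_trans (le_of_lt (hwe m)) hinv

private lemma stageI (k : ℕ) (hk : 0 < k) {ζ : ℝ} (hζ : Irrational ζ) {η₀ : ℝ} (hη₀ : 1 < η₀)
    (P₀ : ∀ X₁ : ℝ, ∃ X : ℝ, X₁ ≤ X ∧ HasSolutions k (fun i => ζ ^ ((i : ℕ) + 1)) η₀ X 1)
    (B : ℝ) :
    ∃ q p : ℤ, 1 ≤ q ∧ IsCoprime q p ∧ B ≤ (q : ℝ) ∧
      |ζ * q - p| ≤ (q : ℝ) ^ (1 - (k : ℝ) - k * η₀) := by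
  set M : ℝ := |ζ| + 1 with hM
  set C : ℝ := M ^ k + 1 with hC
  have hM1 : 1 ≤ M := by have := abs_nonneg ζ; simp only [hM]; linarith
  have hMk : (1:ℝ) ≤ M ^ k := one_le_pow₀ hM1
  have hC1 : (1:ℝ) ≤ C := by simp only [hC]; linarith
  -- the quantity ρ : positive lower bound for ‖ζ n‖ for 1 ≤ n ≤ B
  set n₀ : ℕ := max 1 ⌈B⌉₊ with hn₀
  have hn₀1 : 1 ≤ n₀ := le_max_left _ _
  set S : Finset ℝ := (Finset.Icc 1 n₀).image (fun n : ℕ => |ζ * n - round (ζ * n)|) with hS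
  have hSne : S.Nonempty := by
    refine Finset.Nonempty.image ?_ _
    exact ⟨1, Finset.mem_Icc.mpr ⟨le_refl 1, hn₀1⟩⟩
  set ρ : ℝ := S.min' hSne with hρ
  have hρpos : 0 < ρ := by
    rw [hρ, Finset.lt_min'_iff]
    intro y hy
    rw [hS, Finset.mem_image] at hy
    obtain ⟨n, hn, rfl⟩ := hy
    have hn1 : 1 ≤ n := (Finset.mem_Icc.mp hn).1
    rw [abs_pos]
    intro hzero
    have : ζ * n = round (ζ * n) := by linarith [sub_eq_zero.mp hzero]
    apply hζ
    refine ⟨(round (ζ * n) : ℚ) / (n : ℚ), ?_⟩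
    have hnne : ((n:ℚ):ℝ) ≠ 0 := by
      simp only [Rat.cast_natCast]
      positivity
    push_cast
    rw [div_eq_iff (by exact_mod_cast hnne)]
    linarith
  -- eventual conditions on X'
  have hev1 : ∀ᶠ x : ℝ in Filter.atTop, (1 + M + C) * x ^ (1 - η₀) < 1 := by
    have ht : Filter.Tendsto (fun x : ℝ => (1 + M + C) * x ^ (-(η₀ - 1))) Filter.atTop (nhds 0) := by
      simpa using (tendsto_rpow_neg_atTop (by linarith : (0:ℝ) < η₀ - 1)).const_mul (1 + M + C)
    have := ht.eventually_lt_const (by norm_num : (0:ℝ) < 1)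
    refine this.mono fun x hx => ?_
    convert hx using 3
    · rfl
    · ring
  have hev2 : ∀ᶠ x : ℝ in Filter.atTop, x ^ (-η₀) < ρ := by
    have ht := tendsto_rpow_neg_atTop (by linarith : (0:ℝ) < η₀)
    exact ht.eventually_lt_const hρpos
  obtain ⟨T, hT⟩ := Filter.eventually_atTop.mp
    ((hev1.and hev2).and (Filter.eventually_ge_atTop 2))
  obtain ⟨X', hX'T, hsol⟩ := P₀ T
  obtain ⟨⟨hc1, hc2⟩, hc3⟩ := hT X' hX'T
  have hX'1 : (1:ℝ) < X' := by linarith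
  have hX'pos : (0:ℝ) < X' := by linarith
  obtain ⟨w, hx_pos, hxX, happ⟩ := exists_pos_sol k ζ hX'1 (by linarith : (0:ℝ) < η₀) hsol
  set x : ℤ := w 0 with hx
  set ε₀ : ℝ := X' ^ (-η₀) with hε₀
  have hε₀pos : 0 < ε₀ := Real.rpow_pos_of_pos hX'pos _
  -- reduction to coprime pair
  set y₁ : ℤ := w ((⟨0, hk⟩ : Fin k).succ) with hy₁
  have happ1 : |ζ * (x:ℝ) - (y₁:ℝ)| ≤ ε₀ := by
    have := happ ⟨0, hk⟩
    rw [pow_one] at this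
    exact this
  set g : ℕ := Int.gcd x y₁ with hg
  have hgpos : 0 < g := Int.gcd_pos_iff.mpr (Or.inl (by omega))
  have hgx : ((g:ℤ)) ∣ x := Int.gcd_dvd_left _ _
  have hgy : ((g:ℤ)) ∣ y₁ := Int.gcd_dvd_right _ _
  set q : ℤ := x / g with hq
  set p : ℤ := y₁ / g with hp
  have hqg : q * g = x := Int.ediv_mul_cancel hgx
  have hpg : p * g = y₁ := Int.ediv_mul_cancel hgy
  have hg1 : (1:ℤ) ≤ (g:ℤ) := by exact_mod_cast hgpos
  have hq1 : 1 ≤ q := by nlinarith [hx_pos]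
  have hcop : IsCoprime q p := by
    rw [Int.isCoprime_iff_gcd_eq_one]
    exact Int.gcd_div_gcd_div_gcd hgpos
  have hqx : q ≤ x := by nlinarith
  have hq0 : (0:ℝ) < (q:ℝ) := by exact_mod_cast hq1
  have hxR : (1:ℝ) ≤ (x:ℝ) := by exact_mod_cast hx_pos
  have hxX' : (x:ℝ) ≤ X' := by
    have : |((x:ℤ):ℝ)| = (x:ℝ) := abs_of_pos (by exact_mod_cast hx_pos)
    rw [← this]; exact hxX
  -- δ = |ζ q - p| and its relation
  set δ : ℝ := |ζ * q - p| with hδ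
  have hδg : δ * g = |ζ * x - y₁| := by
    rw [hδ, ← abs_of_pos (show (0:ℝ) < (g:ℝ) by exact_mod_cast hgpos), ← abs_mul]
    congr 1
    have e1 : ((q:ℝ)) * g = (x:ℝ) := by exact_mod_cast hqg
    have e2 : ((p:ℝ)) * g = (y₁:ℝ) := by exact_mod_cast hpg
    calc (ζ * q - p) * g = ζ * ((q:ℝ) * g) - (p:ℝ) * g := by ring
    _ = ζ * x - y₁ := by rw [e1, e2]
  have hgR1 : (1:ℝ) ≤ (g:ℝ) := by exact_mod_cast hg1
  have hδnn : 0 ≤ δ := abs_nonneg _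
  clear_value x y₁ g q p δ ε₀
  have hδε : δ ≤ ε₀ := by
    have h1 : δ * g ≤ ε₀ := by rw [hδg]; exact happ1
    nlinarith
  -- apply the chain lemma
  have hsmall : (q : ℝ) * ((1 + (|ζ| + 1)) * ε₀) + ((|ζ| + 1) ^ k + 1) * X' * |ζ * q - p| < 1 := by
    have hqX' : (q:ℝ) ≤ X' := by
      have : (q:ℝ) ≤ (x:ℝ) := by exact_mod_cast hqx
      linarith
    have t1 : (q : ℝ) * ((1 + M) * ε₀) ≤ X' * ((1 + M) * ε₀) :=
      mul_le_mul_of_nonneg_right hqX' (mul_nonneg (by linarith : (0:ℝ) ≤ 1 + M) hε₀pos.le)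
    have t2 : C * X' * δ ≤ C * X' * ε₀ :=
      mul_le_mul_of_nonneg_left hδε (mul_nonneg (by linarith : (0:ℝ) ≤ C) (by linarith : (0:ℝ) ≤ X'))
    have t3 : X' * ((1 + M) * ε₀) + C * X' * ε₀ = (1 + M + C) * (X' * ε₀) := by ring
    have t4 : X' * ε₀ = X' ^ (1 - η₀) := by
      rw [hε₀, show (1 - η₀) = 1 + (-η₀) by ring, Real.rpow_add hX'pos, Real.rpow_one]
    have t6 : (1 + M + C) * (X' * ε₀) = (1 + M + C) * X' ^ (1 - η₀) := by rw [t4]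
    rw [hδ] at t2
    simp only [hM, hC] at t1 t2 t3 t6 hc1 ⊢
    linarith [t1, t2, t3, t6, hc1]
  have hxX0 : |((w 0 : ℤ):ℝ)| ≤ X' := by rw [← hx]; exact hxX
  have happ0 : ∀ m : Fin k, |ζ ^ ((m:ℕ)+1) * ((w 0 : ℤ):ℝ) - ((w m.succ : ℤ):ℝ)| ≤ ε₀ := by
    intro m; rw [← hx]; exact happ m
  have hdvd : q ^ k ∣ x := by
    rw [hx]
    exact key_chain k ζ hq1 hcop (le_of_lt hX'1) w hxX0 happ0 hε₀pos.le hsmall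
  have hqkx : q ^ k ≤ x := Int.le_of_dvd (by omega) hdvd
  -- B ≤ q
  have hBq : B ≤ (q:ℝ) := by
    by_contra hB
    push_neg at hB
    have hqn : q.toNat ∈ Finset.Icc 1 n₀ := by
      rw [Finset.mem_Icc]
      constructor
      · omega
      · have h1 : (q:ℝ) < (⌈B⌉₊ : ℝ) + 1 := by
          have := Nat.le_ceil B
          linarith
        have h2 : (q:ℤ) < (⌈B⌉₊:ℤ) + 1 := by exact_mod_cast h1
        omega
    have hcast : ((q.toNat : ℕ) : ℝ) = (q : ℝ) := by
      have : ((q.toNat : ℕ) : ℤ) = q := Int.toNat_of_nonneg (by omega)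
      exact_mod_cast this
    have hmem : |ζ * (q:ℝ) - round (ζ * (q:ℝ))| ∈ S := by
      rw [hS, Finset.mem_image]
      exact ⟨q.toNat, hqn, by rw [hcast]⟩
    have hmin := Finset.min'_le S _ hmem
    have hround := abs_sub_round_le' (ζ * q) p
    have : ρ ≤ δ := by rw [hδ]; exact le_trans hmin hround
    linarith [hδε, hc2]
  -- quality
  refine ⟨q, p, hq1, hcop, hBq, ?_⟩
  have hxqk : ((q:ℝ)) ^ (k:ℕ) ≤ (x:ℝ) := by exact_mod_cast hqkx
  have hqk1 : (1:ℝ) ≤ ((q:ℝ)) ^ (k:ℕ) := one_le_pow₀ (by exact_mod_cast hq1)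
  have hε₀x : ε₀ ≤ (x:ℝ) ^ (-η₀) := by
    rw [hε₀]
    exact Real.rpow_le_rpow_of_nonpos (show (0:ℝ) < ((x:ℤ):ℝ) by linarith) hxX' (by linarith)
  have hδq : δ * (x:ℝ) ≤ ε₀ * q := by
    have h1 : δ * g ≤ ε₀ := by rw [hδg]; exact happ1
    have e1 : ((q:ℝ)) * g = (x:ℝ) := by exact_mod_cast hqg
    have h2 : δ * g * q ≤ ε₀ * q := mul_le_mul_of_nonneg_right h1 hq0.le
    have h3 : δ * (x:ℝ) = δ * g * q := by rw [← e1]; ring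
    linarith
  have hxpos' : (0:ℝ) < (x:ℝ) := by linarith
  rw [← hδ]
  calc δ ≤ ε₀ * q / x := by rw [le_div_iff₀ hxpos']; linarith [hδq]
  _ ≤ (x:ℝ) ^ (-η₀) * q / x := by
      exact div_le_div_of_nonneg_right (mul_le_mul_of_nonneg_right hε₀x hq0.le) hxpos'.le
  _ = (q:ℝ) * ((x:ℝ) ^ (-η₀) / x) := by ring
  _ = (q:ℝ) * (x:ℝ) ^ (-η₀ - 1) := by
      rw [Real.rpow_sub hxpos', Real.rpow_one]
  _ ≤ (q:ℝ) * (((q:ℝ) ^ (k:ℕ)) : ℝ) ^ (-η₀ - 1) := by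
      have h5 := Real.rpow_le_rpow_of_nonpos (by linarith : (0:ℝ) < ((q:ℝ))^(k:ℕ)) hxqk
        (by linarith : -η₀ - 1 ≤ 0)
      exact mul_le_mul_of_nonneg_left h5 hq0.le
  _ = (q:ℝ) ^ (1 - (k : ℝ) - k * η₀) := by
      rw [← Real.rpow_natCast (q:ℝ) k, ← Real.rpow_mul (by linarith : (0:ℝ) ≤ (q:ℝ))]
      rw [show (1 - (k : ℝ) - k * η₀) = 1 + (k:ℝ) * (-η₀ - 1) by ring]
      rw [Real.rpow_add hq0, Real.rpow_one]

private lemma main_false (k : ℕ) (hk : 0 < k) {ζ : ℝ} (hζ : Irrational ζ) {η₀ : ℝ} (hη₀ : 1 < η₀)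
    (P₀ : ∀ X₁ : ℝ, ∃ X : ℝ, X₁ ≤ X ∧ HasSolutions k (fun i => ζ ^ ((i : ℕ) + 1)) η₀ X 1)
    {η : ℝ} (hη : 1 / (k : ℝ) < η) {X₀ : ℝ}
    (hP : ∀ X : ℝ, X₀ ≤ X → HasSolutions k (fun i => ζ ^ ((i : ℕ) + 1)) η X 1) : False := by
  set M : ℝ := |ζ| + 1 with hM
  set C : ℝ := M ^ k + 1 with hC
  have hM1 : 1 ≤ M := by have := abs_nonneg ζ; simp only [hM]; linarith
  have hMk : (1:ℝ) ≤ M ^ k := one_le_pow₀ hM1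
  have hC1 : (1:ℝ) ≤ C := by simp only [hC]; linarith
  have hk0 : (0:ℝ) < (k:ℝ) := by exact_mod_cast hk
  have hηpos : 0 < η := lt_trans (by positivity) hη
  have hkη : 1 < (k:ℝ) * η := by
    rw [div_lt_iff₀ hk0] at hη
    linarith [hη]
  have hk1 : (1:ℝ) ≤ (k:ℝ) := by exact_mod_cast hk
  have hkη₀ : 1 < (k:ℝ) * η₀ := by nlinarith [mul_le_mul_of_nonneg_right hk1 (by linarith : (0:ℝ) ≤ η₀)]
  -- eventual conditions as t → ∞
  have hev1 : ∀ᶠ t : ℝ in Filter.atTop, ((1 + M) * 2 ^ η) * t ^ (1 - (k:ℝ) * η) < 1/2 := by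
    have ht : Filter.Tendsto (fun t : ℝ => ((1 + M) * 2 ^ η) * t ^ (-((k:ℝ) * η - 1)))
        Filter.atTop (nhds 0) := by
      simpa using (tendsto_rpow_neg_atTop (by linarith : (0:ℝ) < (k:ℝ) * η - 1)).const_mul
        ((1 + M) * 2 ^ η)
    have := ht.eventually_lt_const (by norm_num : (0:ℝ) < 1/2)
    refine this.mono fun t hx => ?_
    convert hx using 3
    · rfl
    · ring
  have hev2 : ∀ᶠ t : ℝ in Filter.atTop, (C / 2) * t ^ (1 - (k:ℝ) * η₀) < 1/2 := by
    have ht : Filter.Tendsto (fun t : ℝ => (C / 2) * t ^ (-((k:ℝ) * η₀ - 1)))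
        Filter.atTop (nhds 0) := by
      simpa using (tendsto_rpow_neg_atTop (by linarith : (0:ℝ) < (k:ℝ) * η₀ - 1)).const_mul (C / 2)
    have := ht.eventually_lt_const (by norm_num : (0:ℝ) < 1/2)
    refine this.mono fun t hx => ?_
    convert hx using 3
    · rfl
    · ring
  have hev3 : ∀ᶠ t : ℝ in Filter.atTop, 2 * X₀ + 4 ≤ t := Filter.eventually_ge_atTop _
  have hev4 : ∀ᶠ t : ℝ in Filter.atTop, (4:ℝ) ≤ t := Filter.eventually_ge_atTop _
  obtain ⟨G, hG⟩ := Filter.eventually_atTop.mp (((hev1.and hev2).and hev3).and hev4)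
  -- get the good coprime pair
  obtain ⟨q, p, hq1, hcop, hGq, hδq⟩ := stageI k hk hζ hη₀ P₀ G
  obtain ⟨⟨⟨hc1, hc2⟩, hc3⟩, hc4⟩ := hG (q:ℝ) hGq
  set t : ℝ := (q:ℝ) with htdef
  have ht1 : (1:ℝ) ≤ t := by linarith
  have htpos : (0:ℝ) < t := by linarith
  have htk1 : (1:ℝ) ≤ t ^ (k:ℕ) := one_le_pow₀ ht1
  have htkt : t ≤ t ^ (k:ℕ) := le_self_pow₀ ht1 (by omega)
  set X : ℝ := t ^ (k:ℕ) / 2 with hXdef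
  have hX0X : X₀ ≤ X := by
    rw [hXdef]
    have : 2 * X₀ + 4 ≤ t ^ (k:ℕ) := by linarith
    linarith
  have hX1 : (1:ℝ) < X := by
    rw [hXdef]
    have h4 : (4:ℝ) ≤ t := hc4
    linarith [htkt]
  obtain ⟨w, hx_pos, hxX, happ⟩ := exists_pos_sol k ζ hX1 hηpos (hP X hX0X)
  -- smallness for the chain lemma
  have hXpos : (0:ℝ) < X := by linarith
  have hε : (0:ℝ) < X ^ (-η) := Real.rpow_pos_of_pos hXpos _
  have hδnn : (0:ℝ) ≤ |ζ * q - p| := abs_nonneg _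
  have hXneg : X ^ (-η) = t ^ ((k:ℝ) * (-η)) * 2 ^ η := by
    have e1 : X ^ (-η) = (t ^ (k:ℕ)) ^ (-η) / (2:ℝ) ^ (-η) := by
      rw [hXdef]; exact Real.div_rpow (by positivity) (by norm_num) _
    have e2 : ((t ^ (k:ℕ)):ℝ) ^ (-η) = t ^ ((k:ℝ) * (-η)) := by
      rw [← Real.rpow_natCast t k, ← Real.rpow_mul htpos.le]
    have e3 : (2:ℝ) ^ (-η) = ((2:ℝ) ^ η)⁻¹ := Real.rpow_neg (by norm_num) η
    rw [e1, e2, e3, div_inv_eq_mul]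
  have hE1 : (q:ℝ) * ((1 + M) * X ^ (-η)) = ((1 + M) * 2 ^ η) * t ^ (1 - (k:ℝ) * η) := by
    have e4 : t ^ (1 - (k:ℝ) * η) = t * t ^ ((k:ℝ) * (-η)) := by
      rw [show 1 - (k:ℝ) * η = 1 + (k:ℝ) * (-η) by ring, Real.rpow_add htpos, Real.rpow_one]
    rw [hXneg, e4, ← htdef]
    ring
  have hE2 : C * X * ((q:ℝ) ^ (1 - (k:ℝ) - k * η₀)) = (C / 2) * t ^ (1 - (k:ℝ) * η₀) := by
    rw [hXdef]
    rw [← Real.rpow_natCast t k]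
    rw [show C * (t ^ ((k:ℕ):ℝ) / 2) * t ^ (1 - (k:ℝ) - k * η₀)
        = (C / 2) * (t ^ ((k:ℕ):ℝ) * t ^ (1 - (k:ℝ) - k * η₀)) by ring]
    rw [← Real.rpow_add htpos]
    congr 2
    push_cast
    ring
  have hsmall : (q : ℝ) * ((1 + (|ζ| + 1)) * X ^ (-η)) + ((|ζ| + 1) ^ k + 1) * X * |ζ * q - p| < 1 := by
    have s1 : (q : ℝ) * ((1 + M) * X ^ (-η)) < 1/2 := by rw [hE1]; exact hc1
    have s2 : C * X * |ζ * q - p| < 1/2 := by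
      have : C * X * |ζ * q - p| ≤ C * X * ((q:ℝ) ^ (1 - (k:ℝ) - k * η₀)) := by
        apply mul_le_mul_of_nonneg_left hδq
        have : (0:ℝ) ≤ C := by linarith
        nlinarith
      rw [hE2] at this
      linarith [hc2]
    simp only [hM, hC] at s1 s2
    linarith
  have hdvd : q ^ k ∣ w 0 :=
    key_chain k ζ hq1 hcop hX1.le w hxX happ hε.le hsmall
  have hqkx : q ^ k ≤ w 0 := Int.le_of_dvd hx_pos hdvd
  have hfinal : t ^ (k:ℕ) ≤ X := by
    have h1 : ((q:ℤ):ℝ) ^ (k:ℕ) ≤ ((w 0 : ℤ):ℝ) := by exact_mod_cast hqkx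
    have h2 : ((w 0 : ℤ):ℝ) ≤ X := by
      have := abs_of_pos (show (0:ℝ) < ((w 0 : ℤ):ℝ) by exact_mod_cast hx_pos)
      rw [← this]; exact hxX
    exact le_trans h1 h2
  rw [hXdef] at hfinal
  linarith


/-- Corollary: if `λ_{k,1}(ζ) > 1` for an irrational real `ζ`, then `λ̂_{k,1}(ζ) = 1/k`. -/
theorem stmt8 (k : ℕ) (hk : 0 < k) (ζ : ℝ) (hζ : Irrational ζ)
    (h : 1 < lambdaPow k 1 ζ) :
    lambdaHatPow k 1 ζ = 1 / (k : ℝ≥0∞) := by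
  have hk0 : (0:ℝ) < (k:ℝ) := by exact_mod_cast hk
  have hofk : ENNReal.ofReal (1 / (k:ℝ)) = 1 / (k : ℝ≥0∞) := by
    rw [one_div, one_div, ENNReal.ofReal_inv_of_pos hk0, ENNReal.ofReal_natCast]
  -- extract η₀ from h
  have hset : lambdaPow k 1 ζ = sSup {e : ℝ≥0∞ | ∃ η : ℝ, e = ENNReal.ofReal η ∧
      ∀ X₀ : ℝ, ∃ X : ℝ, X₀ ≤ X ∧ HasSolutions k (fun i => ζ ^ ((i : ℕ) + 1)) η X 1} := rfl
  rw [hset] at h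
  obtain ⟨e', he', hlt⟩ := lt_sSup_iff.mp h
  obtain ⟨η₀, rfl, P₀⟩ := he'
  have hη₀ : 1 < η₀ := ENNReal.one_lt_ofReal.mp hlt
  have hhatset : lambdaHatPow k 1 ζ = sSup {e : ℝ≥0∞ | ∃ η : ℝ, e = ENNReal.ofReal η ∧
      ∃ X₀ : ℝ, ∀ X : ℝ, X₀ ≤ X → HasSolutions k (fun i => ζ ^ ((i : ℕ) + 1)) η X 1} := rfl
  apply le_antisymm
  · rw [hhatset]
    apply sSup_le
    rintro e ⟨η, rfl, X₀, hX₀⟩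
    rcases le_or_gt η (1 / (k:ℝ)) with hle | hgt
    · rw [← hofk]
      exact ENNReal.ofReal_le_ofReal hle
    · exact absurd (main_false k hk hζ hη₀ P₀ hgt hX₀) (fun hf => hf.elim)
  · rw [hhatset, ← hofk]
    by_contra hno
    push_neg at hno
    set c := sSup {e : ℝ≥0∞ | ∃ η : ℝ, e = ENNReal.ofReal η ∧
      ∃ X₀ : ℝ, ∀ X : ℝ, X₀ ≤ X → HasSolutions k (fun i => ζ ^ ((i : ℕ) + 1)) η X 1} with hc
    have hctop : c ≠ ⊤ := hno.ne_top
    have hcr : c.toReal < 1 / (k:ℝ) := by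
      have h1 := (ENNReal.lt_ofReal_iff_toReal_lt hctop).mp hno
      exact h1
    set η := (max c.toReal 0 + 1 / (k:ℝ)) / 2 with hη
    have hk1 : (0:ℝ) < 1 / (k:ℝ) := by positivity
    have hmax : max c.toReal 0 < 1 / (k:ℝ) := max_lt hcr hk1
    have hη1 : 0 < η := by
      have := le_max_right c.toReal 0
      rw [hη]; linarith
    have hη2 : η < 1 / (k:ℝ) := by rw [hη]; linarith
    obtain ⟨X₀, hX₀⟩ := hat_lower k hk (fun i => ζ ^ ((i : ℕ) + 1)) hη1 hη2
    have hmem : ENNReal.ofReal η ∈ {e : ℝ≥0∞ | ∃ η : ℝ, e = ENNReal.ofReal η ∧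
      ∃ X₀ : ℝ, ∀ X : ℝ, X₀ ≤ X → HasSolutions k (fun i => ζ ^ ((i : ℕ) + 1)) η X 1} :=
      ⟨η, rfl, X₀, hX₀⟩
    have hle : ENNReal.ofReal η ≤ c := le_sSup hmem
    have hgt : c < ENNReal.ofReal η := by
      rw [ENNReal.lt_ofReal_iff_toReal_lt hctop]
      have := le_max_left c.toReal 0
      rw [hη]; linarith
    exact absurd hle hgt.not_ge
end

section
/- For any positive integers k and n and any transcendental real number ζ, one has λ_{kn,1}(ζ) ≥ (λ_{n,1}(ζ) − k + 1)/k, with the convention that the right-hand side is ∞ when λ_{n,1}(ζ) = ∞. -/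
open scoped ENNReal

section Aux
open Finset
lemma sum_min_eq (n : ℕ) : ∀ (k s : ℕ), s ≤ k * n →
    ∑ j ∈ range k, min n (s - j * n) = s := by
  intro k
  induction k with
  | zero => intro s hs; simp at hs ⊢; omega
  | succ k ih =>
    intro s hs
    rw [Finset.sum_range_succ']
    have h1 : ∀ j : ℕ, min n (s - (j+1) * n) = min n ((s - n) - j * n) := by
      intro j; congr 1; rw [add_mul, one_mul]; omega
    simp only [h1]
    rcases le_or_gt s n with h | h
    · have h2 : ∀ j : ℕ, min n ((s - n) - j * n) = 0 := by intro j; omega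
      simp only [h2]
      simp; omega
    · rw [ih (s - n) (by rw [Nat.succ_mul] at hs; omega)]
      simp; omega

lemma abs_prod_le (b : ℕ → ℝ) (M : ℝ) (k : ℕ) (hb : ∀ j < k, |b j| ≤ M) :
    |∏ j ∈ range k, b j| ≤ M ^ k := by
  rw [Finset.abs_prod]
  calc ∏ j ∈ range k, |b j| ≤ ∏ j ∈ range k, M := by
        apply Finset.prod_le_prod (fun j _ => abs_nonneg _)
        intro j hj; exact hb j (mem_range.mp hj)
    _ = M ^ k := by simp

lemma abs_prod_sub_prod (a b : ℕ → ℝ) (M ε : ℝ) (hM : 0 ≤ M) (hε : 0 ≤ ε) :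
    ∀ k : ℕ, (∀ j ≤ k, |a j| ≤ M) → (∀ j ≤ k, |b j| ≤ M) → (∀ j ≤ k, |a j - b j| ≤ ε) →
    |∏ j ∈ range (k+1), a j - ∏ j ∈ range (k+1), b j| ≤ (k+1) * ε * M ^ k := by
  intro k
  induction k with
  | zero => intro _ _ hab; simpa using hab 0 le_rfl
  | succ k ih =>
    intro ha hb hab
    rw [Finset.prod_range_succ a (k+1), Finset.prod_range_succ b (k+1)]
    have key : (∏ j ∈ range (k+1), a j) * a (k+1) - (∏ j ∈ range (k+1), b j) * b (k+1)
        = a (k+1) * (∏ j ∈ range (k+1), a j - ∏ j ∈ range (k+1), b j)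
          + (a (k+1) - b (k+1)) * ∏ j ∈ range (k+1), b j := by ring
    rw [key]
    calc _ ≤ |a (k+1) * (∏ j ∈ range (k+1), a j - ∏ j ∈ range (k+1), b j)|
            + |(a (k+1) - b (k+1)) * ∏ j ∈ range (k+1), b j| := abs_add_le _ _
      _ ≤ M * ((k+1) * ε * M ^ k) + ε * M ^ (k+1) := by
          rw [abs_mul, abs_mul]
          gcongr
          · exact ha _ le_rfl
          · exact ih (fun j hj => ha j (by omega)) (fun j hj => hb j (by omega))
              (fun j hj => hab j (by omega))
          · exact hab _ le_rfl
          · exact abs_prod_le b M (k+1) (fun j hj => hb j (by omega))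
      _ = (↑(k+1)+1) * ε * M ^ (k+1) := by push_cast; ring

lemma construct (k n : ℕ) (hk : 0 < k) (hn : 0 < n) (ζ : ℝ) (η' η'' : ℝ)
    (hη'' : 0 < η'') (hlt : η'' < η')
    (hP : ∀ X₀ : ℝ, ∃ X : ℝ, X₀ ≤ X ∧
      HasSolutions n (fun i => ζ ^ ((i : ℕ) + 1)) (k * η' + ((k : ℝ) - 1)) X 1) :
    ∀ X₀ : ℝ, ∃ X : ℝ, X₀ ≤ X ∧
      HasSolutions (k * n) (fun i => ζ ^ ((i : ℕ) + 1)) η'' X 1 := by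
  intro X₀
  set η : ℝ := k * η' + ((k : ℝ) - 1) with hηdef
  have hk1 : (1 : ℝ) ≤ k := by exact_mod_cast hk
  have hη'0 : 0 < η' := lt_trans hη'' hlt
  have hη0 : 0 < η := by nlinarith [mul_le_mul_of_nonneg_right hk1 hη'0.le]
  set C0 : ℝ := (|ζ| + 1) ^ n with hC0def
  have hC0 : 1 ≤ C0 := one_le_pow₀ (by linarith [abs_nonneg ζ])
  set K : ℝ := k * (C0 + 1) ^ (k - 1) with hKdef
  have hK : 0 < K := by positivity
  set δ : ℝ := k * (η' - η'') with hδdef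
  have hδ : 0 < δ := by nlinarith
  obtain ⟨X, hXT, v, hli, hsol⟩ := hP (max X₀ (max 2 (K ^ (1/δ))))
  have hX2 : (2 : ℝ) ≤ X := le_trans (le_trans (le_max_left _ _) (le_max_right _ _)) hXT
  have hX1 : (1 : ℝ) ≤ X := by linarith
  have hX0 : (0 : ℝ) < X := by linarith
  have hXK : K ≤ X ^ δ := by
    have h1 : (K ^ (1/δ)) ^ δ = K := by
      rw [← Real.rpow_mul hK.le, one_div, inv_mul_cancel₀ hδ.ne', Real.rpow_one]
    calc K = (K ^ (1/δ)) ^ δ := h1.symm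
      _ ≤ X ^ δ := Real.rpow_le_rpow (Real.rpow_nonneg hK.le _)
          (le_trans (le_trans (le_max_right _ _) (le_max_right _ _)) hXT) hδ.le
  have hε0 : (0:ℝ) < X ^ (-η) := Real.rpow_pos_of_pos hX0 _
  have hε1 : X ^ (-η) ≤ 1 := Real.rpow_le_one_of_one_le_of_nonpos hX1 (by linarith)
  have hεlt : X ^ (-η) < 1 :=
    Real.rpow_lt_one_of_one_lt_of_neg (by linarith) (by linarith)
  obtain ⟨hx, hy⟩ := hsol 0
  set x : ℤ := v 0 0 with hxdef
  -- x ≠ 0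
  have hxne : x ≠ 0 := by
    intro h0
    apply hli.ne_zero 0
    funext j
    refine Fin.cases ?_ ?_ j
    · exact h0
    · intro m
      show v 0 m.succ = 0
      have h := hy m
      rw [h0] at h
      simp only [Int.cast_zero, mul_zero, zero_sub, abs_neg] at h
      have h2 : |(v 0 m.succ : ℝ)| < 1 := lt_of_le_of_lt h hεlt
      rw [← Int.cast_abs] at h2
      have h3 : |v 0 m.succ| < 1 := by exact_mod_cast h2
      obtain ⟨h4, h5⟩ := abs_lt.mp h3
      omega
  set gZ : ℕ → ℤ := fun i => v 0 ⟨min i n, Nat.lt_succ_of_le (min_le_right _ _)⟩ with hgZ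
  have hεbound : ∀ i, i ≤ n → |ζ ^ i * (x : ℝ) - (gZ i : ℝ)| ≤ X ^ (-η) := by
    intro i hi
    rcases Nat.eq_zero_or_pos i with h | h
    · subst h
      have : gZ 0 = x := by simp [hgZ, hxdef]
      rw [this]
      simp [hε0.le]
    · obtain ⟨m, rfl⟩ := Nat.exists_eq_succ_of_ne_zero (by omega : i ≠ 0)
      have hle : m + 1 ≤ n := hi
      have h := hy ⟨m, by omega⟩
      have e1 : gZ (m + 1) = v 0 (Fin.succ ⟨m, by omega⟩) := by
        simp [hgZ, Fin.succ_mk, min_eq_left hle]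
      rw [e1]
      simpa using h
  have habd : ∀ i, i ≤ n → |ζ ^ i * (x : ℝ)| ≤ C0 * X := by
    intro i hi
    rw [abs_mul, abs_pow]
    have h1 : |ζ| ^ i ≤ C0 := by
      calc |ζ| ^ i ≤ (|ζ| + 1) ^ i := pow_le_pow_left₀ (abs_nonneg ζ) (by linarith) i
        _ ≤ (|ζ| + 1) ^ n := pow_le_pow_right₀ (by linarith [abs_nonneg ζ]) hi
    exact mul_le_mul h1 hx (abs_nonneg _) (by linarith)
  have hgb : ∀ i, i ≤ n → |(gZ i : ℝ)| ≤ (C0 + 1) * X := by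
    intro i hi
    have h1 := hεbound i hi
    have h2 := habd i hi
    have h3 : |(gZ i : ℝ)| - |ζ ^ i * (x : ℝ)| ≤ |ζ ^ i * (x : ℝ) - (gZ i : ℝ)| := by
      rw [abs_sub_comm]; exact abs_sub_abs_le_abs_sub _ _
    nlinarith
  have habd' : ∀ i, i ≤ n → |ζ ^ i * (x : ℝ)| ≤ (C0 + 1) * X := by
    intro i hi
    have := habd i hi
    nlinarith
  -- the new solution
  refine ⟨X ^ k, le_trans (le_trans (le_max_left _ _) hXT) (le_self_pow₀ hX1 hk.ne'), ?_⟩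
  refine ⟨fun _ => Fin.cases (x ^ k)
      (fun m => ∏ j ∈ range k, gZ (min n (((m : ℕ) + 1) - j * n))), ?_, ?_⟩
  · apply linearIndependent_unique_iff.mpr
    intro h
    exact pow_ne_zero k hxne (by simpa using congrFun h 0)
  · intro i
    constructor
    · simp only [Fin.cases_zero]
      push_cast
      rw [abs_pow]
      calc |(x : ℝ)| ^ k ≤ X ^ k := pow_le_pow_left₀ (abs_nonneg _) hx k
        _ = X ^ k := rfl
    · intro m
      simp only [Fin.cases_zero, Fin.cases_succ]
      set s : ℕ := (m : ℕ) + 1 with hsdef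
      have hs : s ≤ k * n := m.isLt
      set a : ℕ → ℝ := fun j => ζ ^ (min n (s - j * n)) * (x : ℝ) with hadef
      set b : ℕ → ℝ := fun j => (gZ (min n (s - j * n)) : ℝ) with hbdef
      have hprodA : ∏ j ∈ range k, a j = ζ ^ s * (x : ℝ) ^ k := by
        rw [hadef]
        rw [Finset.prod_mul_distrib, Finset.prod_pow_eq_pow_sum, sum_min_eq n k s hs,
          Finset.prod_const, card_range]
      have hcast : ((∏ j ∈ range k, gZ (min n (s - j * n)) : ℤ) : ℝ)
          = ∏ j ∈ range k, b j := by
        push_cast [hbdef]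
        rfl
      have hk' : k - 1 + 1 = k := Nat.succ_pred_eq_of_pos hk
      have hkc : ((k - 1 : ℕ) : ℝ) + 1 = (k : ℝ) := by
        rw [Nat.cast_sub hk]; ring
      have hmain : |∏ j ∈ range k, a j - ∏ j ∈ range k, b j|
          ≤ (k : ℝ) * (X ^ (-η)) * ((C0 + 1) * X) ^ (k - 1) := by
        have h := abs_prod_sub_prod a b ((C0 + 1) * X) (X ^ (-η))
          (by positivity) hε0.le (k - 1)
          (fun j _ => habd' _ (min_le_left _ _))
          (fun j _ => hgb _ (min_le_left _ _))
          (fun j _ => hεbound _ (min_le_left _ _))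
        rw [hk', hkc] at h
        exact h
      have hfin : (k : ℝ) * (X ^ (-η)) * ((C0 + 1) * X) ^ (k - 1) ≤ (X ^ k) ^ (-η'') := by
        have e1 : ((C0 + 1) * X) ^ (k - 1) = (C0 + 1) ^ (k - 1) * X ^ (k - 1) :=
          mul_pow _ _ _
        have e2 : (X : ℝ) ^ (k - 1 : ℕ) = X ^ ((k : ℝ) - 1) := by
          rw [← Real.rpow_natCast X (k - 1), Nat.cast_sub hk]
          norm_num
        have e3 : (X ^ k : ℝ) ^ (-η'') = X ^ (-((k : ℝ) * η'')) := by
          rw [← Real.rpow_natCast X k, ← Real.rpow_mul hX0.le]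
          congr 1; ring
        have e4 : X ^ ((k : ℝ) - 1) * X ^ (-η) = X ^ (-((k : ℝ) * η')) := by
          rw [← Real.rpow_add hX0]; congr 1; rw [hηdef]; ring
        have e5 : X ^ (-((k : ℝ) * η')) = X ^ (-δ) * X ^ (-((k : ℝ) * η'')) := by
          rw [← Real.rpow_add hX0]; congr 1; rw [hδdef]; ring
        have h6 : K * X ^ (-δ) ≤ 1 := by
          rw [Real.rpow_neg hX0.le]
          have hp : (0 : ℝ) < X ^ δ := Real.rpow_pos_of_pos hX0 _
          rw [← mul_inv_cancel₀ hp.ne']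
          exact mul_le_mul_of_nonneg_right hXK (inv_nonneg.mpr hp.le)
        have hpos : (0 : ℝ) < X ^ (-((k : ℝ) * η'')) := Real.rpow_pos_of_pos hX0 _
        calc (k : ℝ) * (X ^ (-η)) * ((C0 + 1) * X) ^ (k - 1)
            = K * (X ^ ((k : ℝ) - 1) * X ^ (-η)) := by
              rw [e1, e2, hKdef]; ring
          _ = (K * X ^ (-δ)) * X ^ (-((k : ℝ) * η'')) := by rw [e4, e5]; ring
          _ ≤ 1 * X ^ (-((k : ℝ) * η'')) :=
              mul_le_mul_of_nonneg_right h6 hpos.le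
          _ = (X ^ k : ℝ) ^ (-η'') := by rw [one_mul, e3]
      calc |ζ ^ s * ((x ^ k : ℤ) : ℝ)
            - ((∏ j ∈ range k, gZ (min n (s - j * n)) : ℤ) : ℝ)|
          = |∏ j ∈ range k, a j - ∏ j ∈ range k, b j| := by
            rw [hprodA, hcast]; push_cast; ring_nf
        _ ≤ (k : ℝ) * (X ^ (-η)) * ((C0 + 1) * X) ^ (k - 1) := hmain
        _ ≤ (X ^ k) ^ (-η'') := hfin

end Aux

/-- Theorem (Bugeaud): `λ_{kn,1}(ζ) ≥ (λ_{n,1}(ζ) − k + 1)/k` for transcendental `ζ`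
(truncated subtraction in `ℝ≥0∞`; in particular the right side is `∞` when
`λ_{n,1}(ζ) = ∞`). -/
theorem stmt9 (k n : ℕ) (hk : 0 < k) (hn : 0 < n) (ζ : ℝ)
    (hζ : Transcendental ℚ ζ) :
    (lambdaPow n 1 ζ - ((k - 1 : ℕ) : ℝ≥0∞)) / (k : ℝ≥0∞) ≤ lambdaPow (k * n) 1 ζ := by
  have hkR : ((k : ℕ) : ℝ≥0∞) ≠ 0 := by exact_mod_cast hk.ne'
  rw [ENNReal.div_le_iff_le_mul (Or.inl hkR) (Or.inl (ENNReal.natCast_ne_top k))]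
  rw [tsub_le_iff_right]
  have hkR0 : (0 : ℝ) < k := by exact_mod_cast hk
  have hcast : ((k - 1 : ℕ) : ℝ) = (k : ℝ) - 1 := Nat.cast_pred hk
  have hc : ((k - 1 : ℕ) : ℝ≥0∞) = ENNReal.ofReal ((k : ℝ) - 1) := by
    rw [← ENNReal.ofReal_natCast (k - 1), hcast]
  conv_lhs => rw [lambdaPow, lambdaVec]
  apply sSup_le
  rintro e ⟨η, rfl, hPη⟩
  set η' : ℝ := (η - ((k : ℝ) - 1)) / k with hη'def
  have hη'k : η' * (k : ℝ) = η - ((k : ℝ) - 1) := by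
    rw [hη'def]; field_simp
  rcases le_or_gt η' 0 with hcase | hcase
  · have hηle : η ≤ (k : ℝ) - 1 := by nlinarith
    calc ENNReal.ofReal η ≤ ENNReal.ofReal ((k : ℝ) - 1) :=
          ENNReal.ofReal_le_ofReal hηle
      _ = ((k - 1 : ℕ) : ℝ≥0∞) := hc.symm
      _ ≤ _ := le_add_self
  · have hηeq : η = k * η' + ((k : ℝ) - 1) := by nlinarith
    have hB : ENNReal.ofReal η' ≤ lambdaPow (k * n) 1 ζ := by
      by_contra hcon
      push_neg at hcon
      have hBtop : lambdaPow (k * n) 1 ζ ≠ ⊤ := hcon.ne_top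
      have htR : (lambdaPow (k * n) 1 ζ).toReal < η' :=
        (ENNReal.lt_ofReal_iff_toReal_lt hBtop).mp hcon
      set η'' := ((lambdaPow (k * n) 1 ζ).toReal + η') / 2 with hη''def
      have hnn := ENNReal.toReal_nonneg (a := lambdaPow (k * n) 1 ζ)
      have h1 : 0 < η'' := by rw [hη''def]; linarith
      have h2 : η'' < η' := by rw [hη''def]; linarith
      have h3 : (lambdaPow (k * n) 1 ζ).toReal < η'' := by rw [hη''def]; linarith
      have hmem : ENNReal.ofReal η'' ≤ lambdaPow (k * n) 1 ζ := by
        rw [lambdaPow, lambdaVec]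
        exact le_sSup ⟨η'', rfl, construct k n hk hn ζ η' η'' h1 h2
          (by rw [← hηeq]; exact hPη)⟩
      exact absurd hmem
        (not_le.mpr ((ENNReal.lt_ofReal_iff_toReal_lt hBtop).mpr h3))
    calc ENNReal.ofReal η = ENNReal.ofReal (η' * (k : ℝ) + ((k : ℝ) - 1)) := by
          rw [hη'k]; ring_nf
      _ ≤ ENNReal.ofReal (η' * (k : ℝ)) + ENNReal.ofReal ((k : ℝ) - 1) :=
          ENNReal.ofReal_add_le
      _ = ENNReal.ofReal η' * ((k : ℕ) : ℝ≥0∞) + ((k - 1 : ℕ) : ℝ≥0∞) := by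
          rw [ENNReal.ofReal_mul hcase.le, ENNReal.ofReal_natCast, hc]
      _ ≤ lambdaPow (k * n) 1 ζ * ((k : ℕ) : ℝ≥0∞) + ((k - 1 : ℕ) : ℝ≥0∞) := by
          gcongr
end

section
/- Let ζ be an irrational real number and k a positive integer. Then λ̂_{k,1}(ζ) ≤ max{1/λ_{1,1}(ζ), 1/k}, with the convention 1/∞ = 0. -/
open scoped ENNReal
open Filter

lemma good_approx_s11 (ζ : ℝ) (hζ : Irrational ζ) {lam : ℝ} (hlam : 0 < lam)
    (h : ∀ X₀ : ℝ, ∃ X : ℝ, X₀ ≤ X ∧ HasSolutions 1 (fun i => ζ ^ ((i : ℕ) + 1)) lam X 1)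
    (N : ℕ) :
    ∃ Q P : ℤ, (N : ℤ) < Q ∧ IsCoprime P Q ∧ |ζ * Q - P| ≤ (Q : ℝ) ^ (-lam) := by
  classical
  set F : Finset ℤ := (Finset.Icc (-(N : ℤ) - 1) ((N : ℤ) + 1)).erase 0 with hF
  have hFne : F.Nonempty := ⟨1, by simp [hF, Finset.mem_erase, Finset.mem_Icc]⟩
  set c : ℝ := F.inf' hFne (fun q => |ζ * q - round (ζ * (q : ℝ))|) with hc
  have hcpos : 0 < c := by
    rw [hc, Finset.lt_inf'_iff]
    intro q hq
    have hq0 : q ≠ 0 := (Finset.mem_erase.mp hq).1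
    have hirr : Irrational (ζ * q) := by
      simpa [mul_comm] using hζ.intCast_mul hq0
    have := hirr.ne_int (round (ζ * (q : ℝ)))
    rwa [abs_pos, sub_ne_zero]
  have hcle : ∀ q ∈ F, ∀ p : ℤ, c ≤ |ζ * q - p| := by
    intro q hq p
    exact (Finset.inf'_le _ hq).trans (round_le (ζ * (q : ℝ)) p)
  set ε : ℝ := min c 1 with hε
  have hεpos : 0 < ε := lt_min hcpos one_pos
  -- choose X large
  obtain ⟨X, hXge, v, hli, hv⟩ := h (max 1 ((2 / ε) ^ (1 / lam)))
  have hX1 : 1 ≤ X := le_trans (le_max_left _ _) hXge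
  have hX0 : 0 < X := lt_of_lt_of_le one_pos hX1
  have hbase : (0 : ℝ) < (2 / ε) ^ (1 / lam) := Real.rpow_pos_of_pos (by positivity) _
  have hXsmall : X ^ (-lam) < ε := by
    have h1 : ((2 / ε) ^ (1 / lam)) ^ lam ≤ X ^ lam :=
      Real.rpow_le_rpow hbase.le (le_trans (le_max_right _ _) hXge) hlam.le
    have h2 : ((2 / ε) ^ (1 / lam)) ^ lam = 2 / ε := by
      rw [← Real.rpow_mul (by positivity : (0:ℝ) ≤ 2 / ε), one_div,
        inv_mul_cancel₀ hlam.ne', Real.rpow_one]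
    rw [h2] at h1
    rw [Real.rpow_neg hX0.le]
    have hx : (X ^ lam)⁻¹ ≤ (2 / ε)⁻¹ := by
      apply inv_anti₀ (by positivity) h1
    calc (X ^ lam)⁻¹ ≤ (2 / ε)⁻¹ := hx
      _ = ε / 2 := by field_simp
      _ < ε := by linarith
  -- extract the solution
  obtain ⟨hx, hy⟩ := hv 0
  set x : ℤ := v 0 0 with hxdef
  have hy0 : |ζ * (x : ℝ) - (v 0 ((0 : Fin 1).succ) : ℝ)| ≤ X ^ (-lam) := by
    simpa using hy 0
  set y : ℤ := v 0 ((0 : Fin 1).succ) with hydef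
  have hεle1 : ε ≤ 1 := min_le_right _ _
  have hxne : x ≠ 0 := by
    intro h0
    apply hli.ne_zero 0
    funext j
    refine Fin.cases ?_ ?_ j
    · exact h0
    · intro i
      have hi : i = 0 := Subsingleton.elim _ _
      have : |(y : ℝ)| < 1 := by
        have h' := hy0
        rw [h0] at h'
        push_cast at h'
        simp only [mul_zero, zero_sub, abs_neg] at h'
        calc |(y : ℝ)| ≤ X ^ (-lam) := h'
          _ < ε := hXsmall
          _ ≤ 1 := hεle1
      have : y = 0 := by
        rwa [show |(y:ℝ)| = ((|y| : ℤ) : ℝ) by push_cast; ring, ← Int.cast_one, Int.cast_lt,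
          Int.abs_lt_one_iff] at this
      rw [hi]
      simpa [hydef] using this
  set d : ℕ := Int.gcd x y with hd
  have hdpos : 0 < d := Int.gcd_pos_of_ne_zero_left y hxne
  set x' : ℤ := x / d with hx'
  set y' : ℤ := y / d with hy'
  have hdx : (d : ℤ) ∣ x := Int.gcd_dvd_left x y
  have hdy : (d : ℤ) ∣ y := Int.gcd_dvd_right x y
  have hgcd1 : Int.gcd x' y' = 1 := by
    apply Int.gcd_div_gcd_div_gcd
    exact_mod_cast hdpos
  have hxd : x = (d : ℤ) * x' := (Int.mul_ediv_cancel' hdx).symm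
  have hyd : y = (d : ℤ) * y' := (Int.mul_ediv_cancel' hdy).symm
  have hdR : (1 : ℝ) ≤ (d : ℝ) := by exact_mod_cast hdpos
  have happrox : |ζ * (x' : ℝ) - (y' : ℝ)| ≤ X ^ (-lam) := by
    have key : (d : ℝ) * |ζ * (x' : ℝ) - (y' : ℝ)| = |ζ * (x : ℝ) - (y : ℝ)| := by
      rw [hxd, hyd]
      push_cast
      rw [show ζ * ((d:ℝ) * (x':ℝ)) - (d:ℝ) * (y':ℝ) = (d:ℝ) * (ζ * x' - y') by ring,
        abs_mul, abs_of_nonneg (by positivity : (0:ℝ) ≤ (d:ℝ))]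
    nlinarith [hy0, abs_nonneg (ζ * (x' : ℝ) - (y' : ℝ))]
  have hx'ne : x' ≠ 0 := by
    intro h0
    rw [h0, mul_zero] at hxd
    exact hxne hxd
  have hbig : (N : ℤ) + 1 < |x'| := by
    by_contra hle
    push_neg at hle
    have hmem : x' ∈ F := by
      rw [hF, Finset.mem_erase, Finset.mem_Icc]
      rw [abs_le] at hle
      exact ⟨hx'ne, by omega⟩
    have := hcle x' hmem y'
    have : c ≤ X ^ (-lam) := this.trans happrox
    have : c < ε := lt_of_le_of_lt this hXsmall
    exact absurd this (not_lt.mpr (min_le_left _ _))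
  -- |x'| ≤ X
  have hQpos : (0 : ℤ) < |x'| := abs_pos.mpr hx'ne
  have hx'leX : ((|x'| : ℤ) : ℝ) ≤ X := by
    have : |x'| ≤ |x| := by
      rw [hxd, abs_mul]
      nlinarith [abs_nonneg x', (by exact_mod_cast hdpos : (0:ℤ) < (d:ℤ)),
        abs_of_nonneg (by positivity : (0:ℤ) ≤ (d:ℤ)), abs_pos.mpr hx'ne]
    calc ((|x'| : ℤ) : ℝ) ≤ ((|x| : ℤ) : ℝ) := by exact_mod_cast this
      _ = |(x : ℝ)| := by push_cast; ring
      _ ≤ X := hx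
  have hQR : (1 : ℝ) ≤ ((|x'| : ℤ) : ℝ) := by exact_mod_cast hQpos
  have hrpow : X ^ (-lam) ≤ ((|x'| : ℤ) : ℝ) ^ (-lam) := by
    rw [Real.rpow_neg hX0.le, Real.rpow_neg (by linarith)]
    apply inv_anti₀ (Real.rpow_pos_of_pos (by linarith) _)
    exact Real.rpow_le_rpow (by linarith) hx'leX hlam.le
  rcases hx'ne.lt_or_gt with hneg | hpos
  · refine ⟨-x', -y', by rw [abs_of_neg hneg] at hbig; omega, ?_, ?_⟩
    · rw [Int.isCoprime_iff_gcd_eq_one]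
      simpa [Int.gcd_comm] using hgcd1
    · have habs : |(-x' : ℤ)| = |x'| := abs_neg x'
      have : |ζ * ((-x' : ℤ) : ℝ) - ((-y' : ℤ) : ℝ)| = |ζ * (x' : ℝ) - (y' : ℝ)| := by
        push_cast
        rw [show ζ * -(x':ℝ) - -(y':ℝ) = -(ζ * x' - y') by ring, abs_neg]
      rw [this]
      refine happrox.trans ?_
      rw [show ((-x' : ℤ) : ℝ) = ((|x'| : ℤ) : ℝ) by rw [abs_of_neg hneg]]
      exact hrpow
  · refine ⟨x', y', by rw [abs_of_pos hpos] at hbig; omega, ?_, ?_⟩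
    · rw [Int.isCoprime_iff_gcd_eq_one]
      simpa [Int.gcd_comm] using hgcd1
    · refine happrox.trans ?_
      rw [show ((x' : ℤ) : ℝ) = ((|x'| : ℤ) : ℝ) by rw [abs_of_pos hpos]]
      exact hrpow

lemma int_eq_zero_of_abs_lt {n : ℤ} (h : |(n : ℝ)| < 1) : n = 0 := by
  rw [← Int.cast_abs, ← Int.cast_one, Int.cast_lt, Int.abs_lt_one_iff] at h
  exact h

set_option maxHeartbeats 2000000 in
/-- Theorem (Schleischitz): `λ̂_{k,1}(ζ) ≤ max{1/λ_{1,1}(ζ), 1/k}` (with `1/∞ = 0`). -/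
theorem stmt11 (k : ℕ) (hk : 0 < k) (ζ : ℝ) (hζ : Irrational ζ) :
    lambdaHatPow k 1 ζ ≤ max (1 / lambdaPow 1 1 ζ) (1 / (k : ℝ≥0∞)) := by
  rw [lambdaHatPow, lambdaHatVec]
  apply sSup_le
  rintro e ⟨η, rfl, X₀, hunif⟩
  by_contra hcon
  rw [not_le, max_lt_iff] at hcon
  obtain ⟨h1, h2⟩ := hcon
  have hkR : (0 : ℝ) < (k : ℝ) := by exact_mod_cast hk
  -- η > 1/k > 0
  have hk1 : (0 : ℝ≥0∞) < 1 / (k : ℝ≥0∞) := by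
    rw [one_div]
    exact ENNReal.inv_pos.mpr (ENNReal.natCast_ne_top k)
  have hη0 : 0 < η := ENNReal.ofReal_pos.mp (hk1.trans h2)
  have hηk : 1 / (k : ℝ) < η := by
    have heq : (1 : ℝ≥0∞) / (k : ℝ≥0∞) = ENNReal.ofReal (1 / (k : ℝ)) := by
      rw [one_div, one_div, ENNReal.ofReal_inv_of_pos hkR, ENNReal.ofReal_natCast]
    rw [heq] at h2
    exact (ENNReal.ofReal_lt_ofReal_iff_of_nonneg (by positivity)).mp h2
  -- get λ' with 1/η < λ' and arbitrarily-large-X solutions for k = 1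
  have h1' : ENNReal.ofReal η⁻¹ < lambdaPow 1 1 ζ := by
    rw [ENNReal.ofReal_inv_of_pos hη0]
    rw [one_div] at h1
    exact ENNReal.inv_lt_iff_inv_lt.mp h1
  rw [lambdaPow, lambdaVec, lt_sSup_iff] at h1'
  obtain ⟨e', ⟨lam, rfl, hgood⟩, hlt⟩ := h1'
  have hlameta : η⁻¹ < lam :=
    (ENNReal.ofReal_lt_ofReal_iff_of_nonneg (by positivity)).mp hlt
  have hlam0 : 0 < lam := lt_trans (by positivity) hlameta
  -- the exponent s
  set s : ℝ := (η⁻¹ + min lam (k : ℝ)) / 2 with hs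
  have hηinvk : η⁻¹ < (k : ℝ) := by
    rw [one_div] at hηk
    rw [← inv_inv (k : ℝ)]
    exact inv_strictAnti₀ (by positivity) hηk
  have hηinvmin : η⁻¹ < min lam (k : ℝ) := lt_min hlameta hηinvk
  have hs1 : η⁻¹ < s := by rw [hs]; linarith
  have hs0 : 0 < s := lt_trans (by positivity) hs1
  have hslam : s < lam := by
    have := min_le_left lam (k : ℝ); rw [hs]; linarith
  have hsk : s < (k : ℝ) := by
    have := min_le_right lam (k : ℝ); rw [hs]; linarith
  have hsη : 1 < s * η := by
    have := (inv_lt_iff_one_lt_mul₀ hη0).mp hs1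
    nlinarith
  -- constants
  set B : ℝ := max 1 |ζ| with hB
  have hB1 : (1 : ℝ) ≤ B := le_max_left _ _
  set C₁ : ℝ := |ζ| + 1 with hC₁
  have hC₁1 : (1 : ℝ) ≤ C₁ := by rw [hC₁]; linarith [abs_nonneg ζ]
  set C₂ : ℝ := B ^ k + 1 with hC₂
  have hBk : (1:ℝ) ≤ B ^ k := one_le_pow₀ hB1
  have hC₂1 : (1 : ℝ) ≤ C₂ := by rw [hC₂]; linarith
  -- eventual conditions
  have E1 : ∀ᶠ t : ℝ in atTop, C₂ * t ^ (s - lam) < 1 / 2 := by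
    have ht : Tendsto (fun t : ℝ => C₂ * t ^ (s - lam)) atTop (nhds (C₂ * 0)) := by
      apply Tendsto.const_mul
      have : (fun t : ℝ => t ^ (s - lam)) = fun t : ℝ => t ^ (-(lam - s)) := by
        funext t; rw [neg_sub]
      rw [this]
      exact tendsto_rpow_neg_atTop (by linarith)
    rw [mul_zero] at ht
    exact ht.eventually_lt_const (by norm_num)
  have E2 : ∀ᶠ t : ℝ in atTop, C₁ * t ^ (1 - s * η) < 1 / 2 := by
    have ht : Tendsto (fun t : ℝ => C₁ * t ^ (1 - s * η)) atTop (nhds (C₁ * 0)) := by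
      apply Tendsto.const_mul
      have : (fun t : ℝ => t ^ (1 - s * η)) = fun t : ℝ => t ^ (-(s * η - 1)) := by
        funext t; rw [neg_sub]
      rw [this]
      exact tendsto_rpow_neg_atTop (by linarith)
    rw [mul_zero] at ht
    exact ht.eventually_lt_const (by norm_num)
  have E3 : ∀ᶠ t : ℝ in atTop, X₀ ≤ t ^ s :=
    (tendsto_rpow_atTop hs0).eventually_ge_atTop X₀
  have E4 : ∀ᶠ t : ℝ in atTop, (2 : ℝ) ≤ t := eventually_ge_atTop 2
  obtain ⟨T, hT⟩ := eventually_atTop.mp (((E1.and E2).and (E3.and E4)))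
  obtain ⟨N, hN⟩ := exists_nat_ge T
  obtain ⟨Q, P, hQN, hcop, happ⟩ := good_approx_s11 ζ hζ hlam0 hgood N
  have hQT : T ≤ (Q : ℝ) := by
    have : (N : ℝ) ≤ (Q : ℝ) := by exact_mod_cast le_of_lt hQN
    linarith
  obtain ⟨⟨c1, c2⟩, c3, c4⟩ := hT (Q : ℝ) hQT
  have hQ0 : (0 : ℝ) < (Q : ℝ) := by linarith
  have hQ1 : (1 : ℝ) < (Q : ℝ) := by linarith
  set X : ℝ := (Q : ℝ) ^ s with hX
  have hX1 : 1 < X := by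
    rw [hX, Real.one_lt_rpow_iff_of_pos hQ0]
    exact Or.inl ⟨hQ1, hs0⟩
  have hX0 : (0 : ℝ) < X := by linarith
  -- uniform solutions at X
  obtain ⟨v, hli, hv⟩ := hunif X c3
  set w : Fin (k + 1) → ℤ := v 0 with hw
  set u : ℕ → ℤ := fun n => if h : n < k + 1 then w ⟨n, h⟩ else 0 with hu
  have hu0X : |((u 0 : ℤ) : ℝ)| ≤ X := by
    have := (hv 0).1
    simpa [hu, hw] using this
  have hum : ∀ m, m < k → |ζ ^ (m + 1) * ((u 0 : ℤ) : ℝ) - ((u (m + 1) : ℤ) : ℝ)| ≤ X ^ (-η) := by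
    intro m hm
    have := (hv 0).2 ⟨m, hm⟩
    have hsucc : (⟨m, hm⟩ : Fin k).succ = ⟨m + 1, by omega⟩ := rfl
    simpa [hu, hw, hsucc, hm] using this
  have hXneg1 : X ^ (-η) < 1 := Real.rpow_lt_one_of_one_lt_of_neg hX1 (by linarith)
  have hXneg0 : (0 : ℝ) ≤ X ^ (-η) := le_of_lt (Real.rpow_pos_of_pos hX0 _)
  -- u 0 ≠ 0
  have hu0ne : u 0 ≠ 0 := by
    intro h0
    apply hli.ne_zero 0
    funext j
    refine Fin.cases ?_ ?_ j
    · have : u 0 = w 0 := by simp [hu]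
      rw [← hw] at *
      rw [this] at h0
      exact h0
    · intro i
      have h0' : w 0 = 0 := by
        have : u 0 = w 0 := by simp [hu]
        rwa [this] at h0
      have := (hv 0).2 i
      rw [← hw] at this
      rw [h0'] at this
      push_cast at this
      simp only [mul_zero, zero_sub, abs_neg] at this
      have : |(w i.succ : ℝ)| < 1 := lt_of_le_of_lt this hXneg1
      have := int_eq_zero_of_abs_lt this
      simpa using this
  -- coordinate bounds
  have hbound : ∀ i, i ≤ k → |((u i : ℤ) : ℝ)| ≤ C₂ * X := by
    intro i hi
    match i with
    | 0 =>
      calc |((u 0 : ℤ) : ℝ)| ≤ X := hu0X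
        _ ≤ C₂ * X := by nlinarith
    | (m + 1) =>
      have hm : m < k := by omega
      have h := hum m hm
      have hpow : |ζ ^ (m + 1)| ≤ B ^ k := by
        rw [abs_pow]
        calc |ζ| ^ (m + 1) ≤ B ^ (m + 1) :=
              pow_le_pow_left₀ (abs_nonneg ζ) (le_max_right 1 |ζ|) (m + 1)
          _ ≤ B ^ k := pow_le_pow_right₀ hB1 (by omega)
      have htri : |((u (m + 1) : ℤ) : ℝ)| ≤ |ζ ^ (m + 1) * ((u 0 : ℤ) : ℝ)| + X ^ (-η) := by
        have h1 : |((u (m + 1) : ℤ) : ℝ)| - |ζ ^ (m + 1) * ((u 0 : ℤ) : ℝ)|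
            ≤ |((u (m + 1) : ℤ) : ℝ) - ζ ^ (m + 1) * ((u 0 : ℤ) : ℝ)| :=
          abs_sub_abs_le_abs_sub _ _
        rw [abs_sub_comm] at h1
        linarith
      have : |ζ ^ (m + 1) * ((u 0 : ℤ) : ℝ)| ≤ B ^ k * X := by
        rw [abs_mul]
        exact mul_le_mul hpow hu0X (abs_nonneg _) (by linarith)
      have hXη1 : X ^ (-η) ≤ 1 := le_of_lt hXneg1
      calc |((u (m + 1) : ℤ) : ℝ)| ≤ B ^ k * X + 1 := by linarith
        _ ≤ C₂ * X := by rw [hC₂]; nlinarith [hX1, hBk]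
  -- chain bounds
  have hchain : ∀ i, i < k → |ζ * ((u i : ℤ) : ℝ) - ((u (i + 1) : ℤ) : ℝ)| ≤ C₁ * X ^ (-η) := by
    intro i hi
    match i with
    | 0 =>
      have h := hum 0 hi
      rw [pow_one] at h
      calc |ζ * ((u 0 : ℤ) : ℝ) - ((u 1 : ℤ) : ℝ)| ≤ X ^ (-η) := h
        _ ≤ C₁ * X ^ (-η) := by nlinarith
    | (m + 1) =>
      have hA := hum m (by omega)
      have hB' := hum (m + 1) hi
      have hid : ζ * ((u (m + 1) : ℤ) : ℝ) - ((u (m + 2) : ℤ) : ℝ) =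
          -(ζ * (ζ ^ (m + 1) * ((u 0 : ℤ) : ℝ) - ((u (m + 1) : ℤ) : ℝ)))
          + (ζ ^ (m + 2) * ((u 0 : ℤ) : ℝ) - ((u (m + 2) : ℤ) : ℝ)) := by
        ring
      rw [hid]
      calc _ ≤ |(-(ζ * (ζ ^ (m + 1) * ((u 0 : ℤ) : ℝ) - ((u (m + 1) : ℤ) : ℝ))))|
            + |(ζ ^ (m + 2) * ((u 0 : ℤ) : ℝ) - ((u (m + 2) : ℤ) : ℝ))| := abs_add_le _ _
        _ ≤ |ζ| * X ^ (-η) + X ^ (-η) := by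
            rw [abs_neg, abs_mul]
            have := abs_nonneg ζ
            nlinarith
        _ = C₁ * X ^ (-η) := by rw [hC₁]; ring
  -- determinant relations
  have hdet : ∀ i, i < k → u i * P = u (i + 1) * Q := by
    intro i hi
    have key : |((u i * P - u (i + 1) * Q : ℤ) : ℝ)| < 1 := by
      have hid : ((u i * P - u (i + 1) * Q : ℤ) : ℝ)
          = ((u i : ℤ) : ℝ) * (((P : ℝ)) - ζ * Q)
            + (Q : ℝ) * (ζ * ((u i : ℤ) : ℝ) - ((u (i + 1) : ℤ) : ℝ)) := by
        push_cast
        ring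
      rw [hid]
      have t1 : |((u i : ℤ) : ℝ) * (((P : ℝ)) - ζ * Q)| ≤ C₂ * X * (Q : ℝ) ^ (-lam) := by
        rw [abs_mul, abs_sub_comm]
        have hb := hbound i (le_of_lt hi)
        nlinarith [abs_nonneg ((u i : ℤ) : ℝ), abs_nonneg ((P : ℝ) - ζ * Q),
          Real.rpow_pos_of_pos hQ0 (-lam), happ]
      have t2 : |(Q : ℝ) * (ζ * ((u i : ℤ) : ℝ) - ((u (i + 1) : ℤ) : ℝ))|
          ≤ (Q : ℝ) * (C₁ * X ^ (-η)) := by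
        rw [abs_mul, abs_of_pos hQ0]
        have := hchain i hi
        nlinarith
      have e1 : C₂ * X * (Q : ℝ) ^ (-lam) = C₂ * (Q : ℝ) ^ (s - lam) := by
        rw [hX, mul_assoc, ← Real.rpow_add hQ0, sub_eq_add_neg]
      have ex : X ^ (-η) = (Q : ℝ) ^ (s * (-η)) := by
        rw [hX, ← Real.rpow_mul hQ0.le]
      have e2 : (Q : ℝ) * (C₁ * X ^ (-η)) = C₁ * (Q : ℝ) ^ (1 - s * η) := by
        rw [ex, show (1 : ℝ) - s * η = 1 + s * (-η) by ring, Real.rpow_add hQ0,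
          Real.rpow_one]
        ring
      calc |_ + _| ≤ _ + _ := abs_add_le _ _
        _ ≤ C₂ * X * (Q : ℝ) ^ (-lam) + (Q : ℝ) * (C₁ * X ^ (-η)) := by linarith
        _ = C₂ * (Q : ℝ) ^ (s - lam) + C₁ * (Q : ℝ) ^ (1 - s * η) := by rw [e1, e2]
        _ < 1 / 2 + 1 / 2 := by linarith
        _ = 1 := by norm_num
    have := int_eq_zero_of_abs_lt key
    omega
  -- telescoping
  have htel : ∀ i, i ≤ k → u 0 * P ^ i = u i * Q ^ i := by
    intro i
    induction i with
    | zero => intro _; simp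
    | succ i ih =>
      intro hik
      have hi : i < k := by omega
      have h1 := ih (le_of_lt hi)
      have h2 := hdet i hi
      calc u 0 * P ^ (i + 1) = (u 0 * P ^ i) * P := by ring
        _ = (u i * Q ^ i) * P := by rw [h1]
        _ = (u i * P) * Q ^ i := by ring
        _ = (u (i + 1) * Q) * Q ^ i := by rw [h2]
        _ = u (i + 1) * Q ^ (i + 1) := by ring
  -- divisibility and contradiction
  have hdvd : Q ^ k ∣ u 0 := by
    have hco : IsCoprime (Q ^ k) (P ^ k) := (hcop.symm).pow
    apply hco.dvd_of_dvd_mul_right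
    exact ⟨u k, by rw [htel k le_rfl]; ring⟩
  have hle : (Q ^ k : ℤ) ≤ |u 0| :=
    Int.le_of_dvd (abs_pos.mpr hu0ne) ((dvd_abs _ _).mpr hdvd)
  have hleR : ((Q : ℝ)) ^ k ≤ X := by
    calc ((Q : ℝ)) ^ k = ((Q ^ k : ℤ) : ℝ) := by push_cast; ring
      _ ≤ ((|u 0| : ℤ) : ℝ) := by exact_mod_cast hle
      _ = |((u 0 : ℤ) : ℝ)| := by push_cast; ring
      _ ≤ X := hu0X
  have hfin : X < ((Q : ℝ)) ^ k := by
    rw [hX]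
    calc (Q : ℝ) ^ s < (Q : ℝ) ^ ((k : ℕ) : ℝ) :=
        Real.rpow_lt_rpow_of_exponent_lt hQ1 hsk
      _ = (Q : ℝ) ^ k := Real.rpow_natCast _ _
  linarith
end
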